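/- arXiv:1112.1296 — 8 statements merged into one kernel-verified Lean document; each statement's English description precedes it below -/
import Mathlib

section
/- Let (X, d) be a connected and locally connected metric space, and let f, g : X → ℝ be continuous functions with values in [0,1] which have the same family of fibers, i.e., for all x, y ∈ X, f(x) = f(y) if and only if g(x) = g(y). If f is uniformly continuous, then g is uniformly continuous. -/
set_option maxHeartbeats 1000000
set_option linter.unusedSectionVars false

open Set

section Helpers

variable {X : Type*} [TopologicalSpace X]

private lemma myBdOut [LocallyConnectedSpace X] {E : Set X} (hE : IsOpen E) {y w : X}
    (hw : w ∈ closure (connectedComponentIn E y)) (hwE : w ∈ E) :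
    w ∈ connectedComponentIn E y := by
  have h1 : IsOpen (connectedComponentIn E w) := hE.connectedComponentIn
  have h2 : w ∈ connectedComponentIn E w := mem_connectedComponentIn hwE
  obtain ⟨u, hu1, hu2⟩ := mem_closure_iff.mp hw _ h1 h2
  have heq : connectedComponentIn E w = connectedComponentIn E y :=
    (connectedComponentIn_eq hu1).trans (connectedComponentIn_eq hu2).symm
  rw [← heq]; exact h2

private lemma myExistsBoundary [ConnectedSpace X] {C : Set X} (hCo : IsOpen C)
    (hne : C.Nonempty) (hnu : C ≠ univ) : ∃ w, w ∈ closure C ∧ w ∉ C := by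
  by_contra h
  push_neg at h
  have hcl : closure C = C := Subset.antisymm (fun w hw => h w hw) subset_closure
  have : IsClopen C := ⟨closure_eq_iff_isClosed.mp hcl, hCo⟩
  rcases isClopen_iff.mp this with h1 | h1
  · exact hne.ne_empty h1
  · exact hnu h1

/-- The core connectivity lemma: the middle point (in `f`-value) cannot have
strictly the largest `g`-value. -/
private lemma myCore [ConnectedSpace X] [LocallyConnectedSpace X]
    (f g : X → ℝ) (hf : Continuous f) (hg : Continuous g)
    (hfib : ∀ x y : X, f x = f y ↔ g x = g y)
    (x y z : X) (hab : f x < f y) (hbc : f y < f z) :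
    ¬ (g x < g y ∧ g z < g y) := by
  rintro ⟨hA, hC⟩
  set lam : ℝ := (max (g x) (g z) + g y) / 2 with hlamdef
  have hmaxlt : max (g x) (g z) < g y := max_lt hA hC
  have h1 : max (g x) (g z) < lam := by rw [hlamdef]; linarith
  have h2 : lam < g y := by rw [hlamdef]; linarith
  -- lam is a value of g
  have hrange : IsPreconnected (range g) := isPreconnected_range hg
  have hmx : max (g x) (g z) ∈ range g := by
    rcases max_cases (g x) (g z) with ⟨h, _⟩ | ⟨h, _⟩ <;> rw [h]
    exacts [⟨x, rfl⟩, ⟨z, rfl⟩]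
  have hlmem : lam ∈ range g :=
    hrange.Icc_subset hmx ⟨y, rfl⟩ ⟨le_of_lt h1, le_of_lt h2⟩
  obtain ⟨v, hv⟩ := hlmem
  -- the set where g > lam and the component of y in it
  have hEopen : IsOpen (g ⁻¹' Ioi lam) := isOpen_Ioi.preimage hg
  set C := connectedComponentIn (g ⁻¹' Ioi lam) y with hCdef
  have hyE : y ∈ g ⁻¹' Ioi lam := h2
  have hyC : y ∈ C := mem_connectedComponentIn hyE
  have hCopen : IsOpen C := hEopen.connectedComponentIn
  have hCnu : C ≠ univ := by
    intro h
    have : x ∈ g ⁻¹' Ioi lam := connectedComponentIn_subset _ _ (h ▸ mem_univ x)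
    have : lam < g x := this
    have : g x ≤ max (g x) (g z) := le_max_left _ _
    linarith
  obtain ⟨w, hwcl, hwC⟩ := myExistsBoundary hCopen ⟨y, hyC⟩ hCnu
  -- g ≥ lam on closure C
  have hclE : closure C ⊆ g ⁻¹' Ici lam := by
    refine (closure_mono (connectedComponentIn_subset _ _)).trans ?_
    exact closure_minimal (preimage_mono Ioi_subset_Ici_self) (IsClosed.preimage hg isClosed_Ici)
  have hgw : g w = lam := by
    have h3 : lam ≤ g w := hclE hwcl
    have h4 : ¬ (w ∈ g ⁻¹' Ioi lam) := fun hmem => hwC (myBdOut hEopen hwcl hmem)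
    simp only [mem_preimage, mem_Ioi, not_lt] at h4
    linarith
  have hfw : f w = f v := (hfib w v).mpr (by rw [hgw, hv])
  -- the f-image of closure C
  have hSconn : IsPreconnected (f '' closure C) :=
    (isPreconnected_connectedComponentIn.closure).image f hf.continuousOn
  have hbS : f y ∈ f '' closure C := ⟨y, subset_closure hyC, rfl⟩
  have hmuS : f v ∈ f '' closure C := ⟨w, hwcl, hfw⟩
  have havoid : ∀ s ∈ f '' closure C, s ≠ f x ∧ s ≠ f z := by
    rintro s ⟨u, hu, rfl⟩
    have hglam : lam ≤ g u := hclE hu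
    constructor
    · intro h
      have : g u = g x := (hfib u x).mp h
      have : g x ≤ max (g x) (g z) := le_max_left _ _
      linarith
    · intro h
      have : g u = g z := (hfib u z).mp h
      have : g z ≤ max (g x) (g z) := le_max_right _ _
      linarith
  -- f x < f v < f z
  have hamu : f x < f v := by
    by_contra h
    push_neg at h
    have : f x ∈ f '' closure C :=
      hSconn.Icc_subset hmuS hbS ⟨h, le_of_lt hab⟩
    exact (havoid _ this).1 rfl
  have hmuc : f v < f z := by
    by_contra h
    push_neg at h
    have : f z ∈ f '' closure C :=
      hSconn.Icc_subset hbS hmuS ⟨le_of_lt hbc, h⟩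
    exact (havoid _ this).2 rfl
  have hmub : f v ≠ f y := by
    intro h
    have : g v = g y := (hfib v y).mp h
    rw [hv] at this; linarith
  -- now the set where g < lam
  have hE'open : IsOpen (g ⁻¹' Iio lam) := isOpen_Iio.preimage hg
  have key : ∀ t : X, t ∈ g ⁻¹' Iio lam →
      f y ∉ f '' closure (connectedComponentIn (g ⁻¹' Iio lam) t) := by
    rintro t ht ⟨u, hu, hufy⟩
    have hclE' : closure (connectedComponentIn (g ⁻¹' Iio lam) t) ⊆ g ⁻¹' Iic lam := by
      refine (closure_mono (connectedComponentIn_subset _ _)).trans ?_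
      exact closure_minimal (preimage_mono Iio_subset_Iic_self) (IsClosed.preimage hg isClosed_Iic)
    have h3 : g u ≤ lam := hclE' hu
    have : g u = g y := (hfib u y).mp hufy
    linarith
  have bdry : ∀ t : X, t ∈ g ⁻¹' Iio lam →
      f v ∈ f '' closure (connectedComponentIn (g ⁻¹' Iio lam) t) ∧
      f t ∈ f '' closure (connectedComponentIn (g ⁻¹' Iio lam) t) ∧
      IsPreconnected (f '' closure (connectedComponentIn (g ⁻¹' Iio lam) t)) := by
    intro t ht
    set D := connectedComponentIn (g ⁻¹' Iio lam) t with hDdef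
    have htD : t ∈ D := mem_connectedComponentIn ht
    have hDopen : IsOpen D := hE'open.connectedComponentIn
    have hDnu : D ≠ univ := by
      intro h
      have : y ∈ g ⁻¹' Iio lam := connectedComponentIn_subset _ _ (h ▸ mem_univ y)
      have : g y < lam := this
      linarith
    obtain ⟨w', hw'cl, hw'D⟩ := myExistsBoundary hDopen ⟨t, htD⟩ hDnu
    have hclE' : closure D ⊆ g ⁻¹' Iic lam := by
      refine (closure_mono (connectedComponentIn_subset _ _)).trans ?_
      exact closure_minimal (preimage_mono Iio_subset_Iic_self) (IsClosed.preimage hg isClosed_Iic)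
    have hgw' : g w' = lam := by
      have h3 : g w' ≤ lam := hclE' hw'cl
      have h4 : ¬ (w' ∈ g ⁻¹' Iio lam) := fun hmem => hw'D (myBdOut hE'open hw'cl hmem)
      simp only [mem_preimage, mem_Iio, not_lt] at h4
      linarith
    have hfw' : f w' = f v := (hfib w' v).mpr (by rw [hgw', hv])
    refine ⟨⟨w', hw'cl, hfw'⟩, ⟨t, subset_closure htD, rfl⟩, ?_⟩
    exact (isPreconnected_connectedComponentIn.closure).image f hf.continuousOn
  rcases lt_or_gt_of_ne hmub with hcase | hcase
  · -- f v < f y : use component of z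
    have hzE' : z ∈ g ⁻¹' Iio lam := by
      simp only [mem_preimage, mem_Iio]
      have : g z ≤ max (g x) (g z) := le_max_right _ _
      linarith
    obtain ⟨hmu, hft, hconn⟩ := bdry z hzE'
    have : f y ∈ f '' closure (connectedComponentIn (g ⁻¹' Iio lam) z) :=
      hconn.Icc_subset hmu hft ⟨le_of_lt hcase, le_of_lt hbc⟩
    exact key z hzE' this
  · -- f y < f v : use component of x
    have hxE' : x ∈ g ⁻¹' Iio lam := by
      simp only [mem_preimage, mem_Iio]
      have : g x ≤ max (g x) (g z) := le_max_left _ _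
      linarith
    obtain ⟨hmu, hft, hconn⟩ := bdry x hxE'
    have : f y ∈ f '' closure (connectedComponentIn (g ⁻¹' Iio lam) x) :=
      hconn.Icc_subset hft hmu ⟨le_of_lt hab, le_of_lt hcase⟩
    exact key x hxE' this

end Helpers

section Mono

variable {X : Type*} [MetricSpace X] [ConnectedSpace X] [LocallyConnectedSpace X]
variable {f g : X → ℝ}

/-- both-sided consequence of the core lemma -/
private lemma myCore2 (hf : Continuous f) (hg : Continuous g)
    (hfib : ∀ x y : X, f x = f y ↔ g x = g y)
    (x y z : X) (hab : f x < f y) (hbc : f y < f z) :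
    ¬ (g x < g y ∧ g z < g y) ∧ ¬ (g y < g x ∧ g y < g z) := by
  constructor
  · exact myCore f g hf hg hfib x y z hab hbc
  · have := myCore f (fun u => -(g u)) hf hg.neg
      (fun a b => (hfib a b).trans neg_inj.symm) x y z hab hbc
    simpa using this

private lemma gne (hfib : ∀ x y : X, f x = f y ↔ g x = g y) {a b : X} (h : f a ≠ f b) :
    g a ≠ g b := fun hc => h ((hfib a b).mpr hc)

/-- move the right endpoint -/
private lemma myT1 (hf : Continuous f) (hg : Continuous g)
    (hfib : ∀ x y : X, f x = f y ↔ g x = g y)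
    {x z : X} (hxz : f x < f z) (hgxz : g x < g z) {z' : X} (hxz' : f x < f z') :
    g x < g z' := by
  rcases lt_trichotomy (f z') (f z) with h | h | h
  · by_contra hcon
    push_neg at hcon
    have hne : g z' ≠ g x := gne hfib (ne_of_gt hxz')
    have h5 : g z' < g x := lt_of_le_of_ne hcon hne
    exact (myCore2 hf hg hfib x z' z hxz' h).2 ⟨h5, by linarith⟩
  · have : g z' = g z := (hfib z' z).mp h
    linarith
  · by_contra hcon
    push_neg at hcon
    have hne : g z' ≠ g x := gne hfib (ne_of_gt hxz')
    have h5 : g z' < g x := lt_of_le_of_ne hcon hne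
    have := (myCore2 hf hg hfib x z z' hxz h).1
    exact this ⟨hgxz, by linarith⟩

/-- move the left endpoint -/
private lemma myT2 (hf : Continuous f) (hg : Continuous g)
    (hfib : ∀ x y : X, f x = f y ↔ g x = g y)
    {x z : X} (hxz : f x < f z) (hgxz : g x < g z) {x' : X} (hx'z : f x' < f z) :
    g x' < g z := by
  rcases lt_trichotomy (f x') (f x) with h | h | h
  · by_contra hcon
    push_neg at hcon
    have hne : g z ≠ g x' := gne hfib (ne_of_gt hx'z)
    have h5 : g z < g x' := lt_of_le_of_ne hcon hne
    exact (myCore2 hf hg hfib x' x z h (by linarith)).2 ⟨by linarith, by linarith⟩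
  · have : g x' = g x := (hfib x' x).mp h
    linarith
  · by_contra hcon
    push_neg at hcon
    have hne : g z ≠ g x' := gne hfib (ne_of_gt hx'z)
    have h5 : g z < g x' := lt_of_le_of_ne hcon hne
    exact (myCore2 hf hg hfib x x' z h hx'z).1 ⟨by linarith, h5⟩

/-- global strict monotonicity from a single anchored pair -/
private lemma myMono (hf : Continuous f) (hg : Continuous g)
    (hfib : ∀ x y : X, f x = f y ↔ g x = g y)
    {p q : X} (hpq : f p < f q) (hgpq : g p < g q) :
    ∀ x z : X, f x < f z → g x < g z := by
  intro x z hxz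
  obtain ⟨M, hMq, hMz⟩ : ∃ M : X, f q ≤ f M ∧ f z ≤ f M := by
    rcases le_total (f q) (f z) with h | h
    exacts [⟨z, h, le_rfl⟩, ⟨q, le_rfl, h⟩]
  obtain ⟨m, hmp, hmx⟩ : ∃ m : X, f m ≤ f p ∧ f m ≤ f x := by
    rcases le_total (f p) (f x) with h | h
    exacts [⟨p, le_rfl, h⟩, ⟨x, h, le_rfl⟩]
  have s1 : g p < g M := myT1 hf hg hfib hpq hgpq (lt_of_lt_of_le hpq hMq)
  have s2 : g m < g M := myT2 hf hg hfib (lt_of_lt_of_le hpq hMq) s1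
    (lt_of_le_of_lt hmp (lt_of_lt_of_le hpq hMq))
  have s3 : g x < g M := myT2 hf hg hfib
    (lt_of_le_of_lt hmp (lt_of_lt_of_le hpq hMq)) s2 (lt_of_lt_of_le hxz hMz)
  exact myT1 hf hg hfib (lt_of_lt_of_le hxz hMz) s3 hxz

/-- quantitative modulus: from strict monotonicity to a uniform modulus. -/
private lemma myKey (hg : Continuous g)
    (hgr : ∀ x, g x ∈ Set.Icc (0 : ℝ) 1)
    (hfib : ∀ x y : X, f x = f y ↔ g x = g y)
    (hmono : ∀ x z : X, f x < f z → g x < g z)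
    {ε : ℝ} (hε : 0 < ε) :
    ∃ δ > 0, ∀ x y : X, |f x - f y| < δ → |g x - g y| < ε := by
  have hXne : Nonempty X := inferInstance
  have hne : (range g).Nonempty := range_nonempty g
  have hbdd : BddAbove (range g) := ⟨1, by rintro t ⟨u, rfl⟩; exact (hgr u).2⟩
  have hbdb : BddBelow (range g) := ⟨0, by rintro t ⟨u, rfl⟩; exact (hgr u).1⟩
  set m := sInf (range g) with hmdef
  set M := sSup (range g) with hMdef
  have hgm : ∀ u, m ≤ g u := fun u => csInf_le hbdb ⟨u, rfl⟩
  have hgM : ∀ u, g u ≤ M := fun u => le_csSup hbdd ⟨u, rfl⟩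
  have monole : ∀ x z : X, f x ≤ f z → g x ≤ g z := by
    intro x z h
    rcases eq_or_lt_of_le h with h | h
    · exact le_of_eq ((hfib x z).mp h)
    · exact le_of_lt (hmono x z h)
  by_cases hMm : M ≤ m
  · refine ⟨1, one_pos, fun x y _ => ?_⟩
    have := hgm x; have := hgm y; have := hgM x; have := hgM y
    rw [abs_sub_lt_iff]; constructor <;> linarith
  push_neg at hMm
  obtain ⟨N', hN'⟩ := exists_nat_gt (4 * (M - m) / ε)
  set N := N' + 3 with hNdef
  have hN3 : 3 ≤ N := by omega
  have hNR : 4 * (M - m) / ε < (N : ℝ) := by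
    refine lt_of_lt_of_le hN' ?_
    rw [hNdef]; push_cast; linarith
  have hNpos : (0 : ℝ) < N := by positivity
  set h := (M - m) / N with hhdef
  have hh : 0 < h := div_pos (by linarith) hNpos
  have hNh : (N : ℝ) * h = M - m := by
    rw [hhdef]; field_simp
  have h4 : 4 * h < ε := by
    have h1 : 4 * (M - m) < ε * N := by
      rw [div_lt_iff₀ hε] at hNR; linarith
    nlinarith [h1, hNh, hNpos]
  -- every value strictly between m and M is attained by g
  have hmem : ∀ t : ℝ, m < t → t < M → t ∈ range g := by
    intro t h1 h2
    obtain ⟨p, hp, hplt⟩ := exists_lt_of_csInf_lt hne h1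
    obtain ⟨q, hq, hqlt⟩ := exists_lt_of_lt_csSup hne h2
    exact (isPreconnected_range hg).Icc_subset hp hq ⟨le_of_lt hplt, le_of_lt hqlt⟩
  have hch : ∀ k : ℕ, ∃ u : X, g u = m + (((min k (N - 1) : ℕ) : ℝ) + 1 / 2) * h := by
    intro k
    have hc1 : ((min k (N - 1) : ℕ) : ℝ) ≤ (N : ℝ) - 1 := by
      have h1 : (min k (N - 1) : ℕ) ≤ N - 1 := min_le_right _ _
      have h2 : ((min k (N - 1) : ℕ) : ℝ) ≤ ((N - 1 : ℕ) : ℝ) := by exact_mod_cast h1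
      refine h2.trans ?_
      push_cast [Nat.cast_sub (by omega : 1 ≤ N)]
      linarith
    have hc0 : (0 : ℝ) ≤ ((min k (N - 1) : ℕ) : ℝ) := Nat.cast_nonneg _
    apply hmem
    · have := mul_pos (show (0:ℝ) < ((min k (N - 1) : ℕ) : ℝ) + 1 / 2 by linarith) hh
      linarith
    · have : (((min k (N - 1) : ℕ) : ℝ) + 1 / 2) * h < (N : ℝ) * h :=
        mul_lt_mul_of_pos_right (by linarith) hh
      linarith [hNh]
  choose ζ hζ using hch
  have hgζ : ∀ k : ℕ, k ≤ N - 1 → g (ζ k) = m + ((k : ℝ) + 1 / 2) * h := by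
    intro k hk
    rw [hζ k, min_eq_left hk]
  have hfζ : ∀ k : ℕ, k + 1 ≤ N - 1 → f (ζ k) < f (ζ (k + 1)) := by
    intro k hk
    have hg1 : g (ζ k) < g (ζ (k + 1)) := by
      rw [hgζ k (by omega), hgζ (k + 1) hk]
      push_cast
      have : ((k : ℝ) + 1 / 2) * h < ((k : ℝ) + 1 + 1 / 2) * h :=
        mul_lt_mul_of_pos_right (by linarith) hh
      linarith
    by_contra hcon
    push_neg at hcon
    exact absurd (monole _ _ hcon) (not_le.mpr hg1)
  have hrne : (Finset.range (N - 1)).Nonempty := by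
    rw [Finset.nonempty_range_iff]; omega
  set δ := (Finset.range (N - 1)).inf' hrne (fun k => f (ζ (k + 1)) - f (ζ k)) with hδdef
  have hδpos : 0 < δ := by
    rw [hδdef, Finset.lt_inf'_iff]
    intro k hk
    rw [Finset.mem_range] at hk
    exact sub_pos.mpr (hfζ k (by omega))
  refine ⟨δ, hδpos, ?_⟩
  have main : ∀ x y : X, f x ≤ f y → f y - f x < δ → g y - g x < ε := by
    intro x y hfxy hd
    by_contra hcon
    push_neg at hcon
    set k0 := Nat.floor ((g x - m) / h) with hk0def
    have hr0 : 0 ≤ (g x - m) / h := div_nonneg (by linarith [hgm x]) hh.le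
    have hfl : (k0 : ℝ) ≤ (g x - m) / h := Nat.floor_le hr0
    have hfl2 : (g x - m) / h < (k0 : ℝ) + 1 := Nat.lt_floor_add_one _
    have e1 : (k0 : ℝ) * h ≤ g x - m := by
      rw [← le_div_iff₀ hh]; exact hfl
    have e2 : g x - m < ((k0 : ℝ) + 1) * h := by
      rw [← div_lt_iff₀ hh]; exact hfl2
    have eM : g y ≤ m + (N : ℝ) * h := by rw [hNh]; linarith [hgM y]
    have ek : ((k0 : ℝ) + 5 / 2) * h < (N : ℝ) * h := by
      have ex1 : ((k0 : ℝ) + 5 / 2) * h = (k0 : ℝ) * h + 5 / 2 * h := by ring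
      linarith
    have ekR : (k0 : ℝ) + 5 / 2 < (N : ℝ) := by
      exact lt_of_mul_lt_mul_right (by linarith [ek]) hh.le
    have ekN : k0 + 2 ≤ N - 1 := by
      have : (k0 : ℝ) + 2 < (N : ℝ) := by linarith
      have h2 : k0 + 2 < N := by exact_mod_cast this
      omega
    have hgk : g (ζ (k0 + 1)) = m + (((k0 : ℝ) + 1) + 1 / 2) * h := by
      rw [hgζ (k0 + 1) (by omega)]; push_cast; ring_nf
    have hgk1 : g (ζ (k0 + 2)) = m + (((k0 : ℝ) + 2) + 1 / 2) * h := by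
      rw [hgζ (k0 + 2) (by omega)]; push_cast; ring_nf
    have c1 : g x < g (ζ (k0 + 1)) := by
      rw [hgk]
      have ex1 : ((k0 : ℝ) + 1 + 1 / 2) * h = ((k0 : ℝ) + 1) * h + 1 / 2 * h := by ring
      linarith
    have c2 : g (ζ (k0 + 2)) < g y := by
      rw [hgk1]
      have ex1 : ((k0 : ℝ) + 2 + 1 / 2) * h = (k0 : ℝ) * h + 5 / 2 * h := by ring
      linarith
    have d1 : f x < f (ζ (k0 + 1)) := by
      by_contra hcc
      push_neg at hcc
      exact absurd (monole _ _ hcc) (not_le.mpr c1)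
    have d2 : f (ζ (k0 + 2)) < f y := by
      by_contra hcc
      push_neg at hcc
      exact absurd (monole _ _ hcc) (not_le.mpr c2)
    have d3 : δ ≤ f (ζ (k0 + 1 + 1)) - f (ζ (k0 + 1)) := by
      refine Finset.inf'_le _ ?_
      rw [Finset.mem_range]; omega
    have d2' : f (ζ (k0 + 1 + 1)) < f y := by
      have : k0 + 1 + 1 = k0 + 2 := by omega
      rw [this]; exact d2
    linarith
  intro x y hxy
  rw [abs_sub_lt_iff] at hxy
  rcases le_total (f x) (f y) with hle | hle
  · have h1 := main x y hle (by linarith [hxy.2])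
    have h2 := monole x y hle
    rw [abs_sub_lt_iff]; constructor <;> linarith
  · have h1 := main y x hle (by linarith [hxy.1])
    have h2 := monole y x hle
    rw [abs_sub_lt_iff]; constructor <;> linarith

end Mono

/-- Let `X` be a connected and locally connected metric space and `f, g : X → [0,1]`
continuous functions with the same family of fibers. If `f` is uniformly continuous,
then so is `g`. -/
theorem stmt1 {X : Type*} [MetricSpace X] [ConnectedSpace X] [LocallyConnectedSpace X]
    (f g : X → ℝ) (hf : Continuous f) (hg : Continuous g)
    (hfr : ∀ x, f x ∈ Set.Icc (0 : ℝ) 1) (hgr : ∀ x, g x ∈ Set.Icc (0 : ℝ) 1)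
    (hfib : ∀ x y : X, f x = f y ↔ g x = g y)
    (hufc : UniformContinuous f) : UniformContinuous g := by
  rw [Metric.uniformContinuous_iff]
  intro ε hε
  by_cases hconst : ∀ x y : X, f x = f y
  · refine ⟨1, one_pos, fun {a b} _ => ?_⟩
    have hab : g a = g b := (hfib a b).mp (hconst a b)
    simpa [Real.dist_eq, hab, sub_self] using hε
  · push_neg at hconst
    obtain ⟨p₀, q₀, hpq₀⟩ := hconst
    obtain ⟨p, q, hpq⟩ : ∃ p q : X, f p < f q := by
      rcases lt_or_gt_of_ne hpq₀ with h | h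
      exacts [⟨p₀, q₀, h⟩, ⟨q₀, p₀, h⟩]
    have hgne : g p ≠ g q := gne hfib (ne_of_gt hpq).symm
    have huf := Metric.uniformContinuous_iff.mp hufc
    rcases lt_or_gt_of_ne hgne with hc | hc
    · have hmono := myMono hf hg hfib hpq hc
      obtain ⟨δ, hδ, hkey⟩ := myKey hg hgr hfib hmono hε
      obtain ⟨δ', hδ', hf'⟩ := huf δ hδ
      refine ⟨δ', hδ', fun {a b} hab => ?_⟩
      rw [Real.dist_eq]
      refine hkey a b ?_
      rw [← Real.dist_eq]
      exact hf' hab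
    · set g' : X → ℝ := fun u => 1 - g u with hg'def
      have hg' : Continuous g' := continuous_const.sub hg
      have hfib' : ∀ x y : X, f x = f y ↔ g' x = g' y := fun a b =>
        (hfib a b).trans (by simp [hg'def, sub_right_inj])
      have hgr' : ∀ x, g' x ∈ Set.Icc (0 : ℝ) 1 := fun u =>
        ⟨by simp only [hg'def]; linarith [(hgr u).2], by simp only [hg'def]; linarith [(hgr u).1]⟩
      have hc' : g' p < g' q := by simp only [hg'def]; linarith
      have hmono := myMono hf hg' hfib' hpq hc'
      obtain ⟨δ, hδ, hkey⟩ := myKey hg' hgr' hfib' hmono hε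
      obtain ⟨δ', hδ', hf'⟩ := huf δ hδ
      refine ⟨δ', hδ', fun {a b} hab => ?_⟩
      have h1 : |f a - f b| < δ := by rw [← Real.dist_eq]; exact hf' hab
      have h2 := hkey a b h1
      rw [Real.dist_eq]
      have h3 : |g a - g b| = |g' a - g' b| := by
        simp only [hg'def]
        rw [show (1 - g a) - (1 - g b) = -(g a - g b) by ring, abs_neg]
      rw [h3]
      exact h2
end

section
/- Let X be a metric space and let f : X → ℝ be a continuous uniformly approachable (UA) function. Then f has distant connected components of fibers (DCF). -/
/-- A continuous `f : X → ℝ` is uniformly approachable (UA) if for every compact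
`K ⊆ X` and every `M ⊆ X` there is a uniformly continuous `g : X → ℝ` with `g = f`
on `K` and `g(M) ⊆ f(M)`. -/
def IsUA {X : Type*} [MetricSpace X] (f : X → ℝ) : Prop :=
  ∀ K : Set X, IsCompact K → ∀ M : Set X,
    ∃ g : X → ℝ, UniformContinuous g ∧ (∀ x ∈ K, g x = f x) ∧ g '' M ⊆ f '' M

/-- A function `f : X → ℝ` has distant connected components of fibers (DCF) if any two
nonempty connected subsets of distinct fibers are at positive distance. -/
def HasDCF {X : Type*} [MetricSpace X] (f : X → ℝ) : Prop :=
  ∀ u v : ℝ, u ≠ v → ∀ A B : Set X, A.Nonempty → B.Nonempty →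
    IsPreconnected A → IsPreconnected B → A ⊆ f ⁻¹' {u} → B ⊆ f ⁻¹' {v} →
    ∃ ε > (0 : ℝ), ∀ a ∈ A, ∀ b ∈ B, ε ≤ dist a b

/-- UA implies DCF for continuous real-valued functions on an arbitrary metric space. -/
theorem stmt4 {X : Type*} [MetricSpace X] (f : X → ℝ)
    (hf : Continuous f) (hUA : IsUA f) : HasDCF f := by
  intro u v huv A B hA hB hAc hBc hAu hBv
  by_contra h
  push_neg at h
  obtain ⟨a₀, ha₀⟩ := hA
  obtain ⟨b₀, hb₀⟩ := hB
  obtain ⟨g, hgU, hgK, hgM⟩ := hUA {a₀, b₀} (Set.toFinite _).isCompact (A ∪ B)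
  have hga₀ : g a₀ = u := by rw [hgK a₀ (by simp)]; exact hAu ha₀
  have hgb₀ : g b₀ = v := by rw [hgK b₀ (by simp)]; exact hBv hb₀
  have hfM : f '' (A ∪ B) ⊆ {u, v} := by
    rintro _ ⟨x, hx | hx, rfl⟩
    · exact Or.inl (hAu hx)
    · exact Or.inr (hBv hx)
  have main : ∀ (S : Set X) (w w' : ℝ), w ≠ w' → IsPreconnected S →
      g '' S ⊆ {w, w'} → ∀ x₀ ∈ S, g x₀ = w → ∀ x ∈ S, g x = w := by
    intro S w w' hww hS hsub x₀ hx₀ hgx₀ x hx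
    by_contra hgx
    have hgx' : g x = w' := by
      rcases hsub ⟨x, hx, rfl⟩ with h1 | h1
      · exact absurd h1 hgx
      · exact h1
    have hconn : IsPreconnected (g '' S) := hS.image g hgU.continuous.continuousOn
    have hord := hconn.ordConnected
    have hmid : (w + w') / 2 ∈ g '' S := by
      rcases le_total w w' with hle | hle
      · exact hord.out ⟨x₀, hx₀, hgx₀⟩ ⟨x, hx, hgx'⟩ ⟨by linarith, by linarith⟩
      · exact hord.out ⟨x, hx, hgx'⟩ ⟨x₀, hx₀, hgx₀⟩ ⟨by linarith, by linarith⟩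
    rcases hsub hmid with h1 | h1
    · exact hww (by linarith)
    · rw [Set.mem_singleton_iff] at h1
      exact hww (by linarith)
  have hgA : ∀ x ∈ A, g x = u := by
    refine main A u v huv hAc ?_ a₀ ha₀ hga₀
    exact fun y hy => hfM (hgM (Set.image_mono (f := g) Set.subset_union_left hy))
  have hgB : ∀ x ∈ B, g x = v := by
    refine main B v u huv.symm hBc ?_ b₀ hb₀ hgb₀
    intro y hy
    rcases hfM (hgM (Set.image_mono (f := g) Set.subset_union_right hy)) with h1 | h1
    · exact Or.inr h1
    · exact Or.inl h1
  have hε : (0 : ℝ) < |u - v| := abs_pos.mpr (sub_ne_zero.mpr huv)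
  obtain ⟨δ, hδ, hδ'⟩ := Metric.uniformContinuous_iff.mp hgU _ hε
  obtain ⟨a, ha, b, hb, hab⟩ := h δ hδ
  have := hδ' hab
  rw [hgA a ha, hgB b hb, Real.dist_eq] at this
  exact lt_irrefl _ this
end

section
/- Let X be a locally connected metric space and let f : X → ℝ be a continuous TUA (truncation-UA) function. Then f has distant connected components of fibers (DCF). -/
/-- `g` is a truncation of `f` if `g` is continuous and `g` is constant on every
connected component of the set `{x | g x ≠ f x}`. -/
def IsTruncation {X : Type*} [TopologicalSpace X] (f g : X → ℝ) : Prop :=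
  Continuous g ∧ ∀ x : X, g x ≠ f x →
    ∀ y ∈ connectedComponentIn {z : X | g z ≠ f z} x, g y = g x

/-- A continuous `f : X → ℝ` is TUA (truncation-UA) if for every compact `K ⊆ X`
there is a uniformly continuous truncation `g` of `f` with `g = f` on `K`. -/
def IsTUA {X : Type*} [MetricSpace X] (f : X → ℝ) : Prop :=
  ∀ K : Set X, IsCompact K →
    ∃ g : X → ℝ, IsTruncation f g ∧ UniformContinuous g ∧ ∀ x ∈ K, g x = f x

/-- Key lemma: a truncation `g` of `f` which agrees with `f` at one point of a
preconnected subset of a fiber of `f` is constant on that subset. -/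
lemma trunc_const_on_fiber {X : Type*} [MetricSpace X] [LocallyConnectedSpace X]
    {f g : X → ℝ} (hf : Continuous f) (hg : IsTruncation f g) {u : ℝ} {A : Set X}
    (hA : IsPreconnected A) (hAf : A ⊆ f ⁻¹' {u}) {a₀ : X} (ha₀ : a₀ ∈ A)
    (hga₀ : g a₀ = u) : ∀ x ∈ A, g x = u := by
  intro x hx
  by_contra hgx
  set U : Set X := {z : X | g z ≠ f z} with hU
  have hUopen : IsOpen U := isOpen_ne_fun hg.1 hf
  have hfx : f x = u := hAf hx
  have hxU : x ∈ U := by simp [hU, hfx, hgx]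
  set C : Set X := connectedComponentIn U x with hC
  have hCopen : IsOpen C := hUopen.connectedComponentIn
  have hgC : ∀ y ∈ C, g y = g x := hg.2 x (by simpa [hU, hfx] using hgx)
  -- g = g x on closure C
  have hgclC : ∀ y ∈ closure C, g y = g x := by
    intro y hy
    have : closure C ⊆ {z | g z = g x} :=
      closure_minimal hgC (isClosed_eq hg.1 continuous_const)
    exact this hy
  -- points of closure C \ C are not in U
  have hfrontier : ∀ z, z ∈ closure C → z ∉ C → z ∉ U := by
    intro z hzcl hzC hzU
    have hopen' : IsOpen (connectedComponentIn U z) := hUopen.connectedComponentIn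
    have hmem : z ∈ connectedComponentIn U z := mem_connectedComponentIn hzU
    obtain ⟨w, hw1, hw2⟩ := mem_closure_iff.mp hzcl _ hopen' hmem
    have h1 : connectedComponentIn U z = connectedComponentIn U w :=
      connectedComponentIn_eq hw1
    have h2 : C = connectedComponentIn U w := connectedComponentIn_eq hw2
    have hz' : z ∈ connectedComponentIn U w := h1 ▸ hmem
    exact hzC (h2 ▸ hz')
  -- A avoids closure C \ C
  have hsub : A ⊆ C ∪ (closure C)ᶜ := by
    intro z hz
    by_cases hzC : z ∈ C
    · exact Or.inl hzC
    · refine Or.inr fun hzcl => ?_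
      have hzU : z ∉ U := hfrontier z hzcl hzC
      have : g z = f z := by simpa [hU] using hzU
      have hfz : f z = u := hAf hz
      have : g z = g x := hgclC z hzcl
      exact hgx (by rw [← this, ‹g z = f z›, hfz])
  have ha₀C : a₀ ∉ closure C := fun h => hgx (by rw [← hgclC a₀ h, hga₀])
  have hne1 : (A ∩ C).Nonempty := ⟨x, hx, mem_connectedComponentIn hxU⟩
  have hne2 : (A ∩ (closure C)ᶜ).Nonempty := ⟨a₀, ha₀, ha₀C⟩
  obtain ⟨w, -, hw1, hw2⟩ := hA C (closure C)ᶜ hCopen isClosed_closure.isOpen_compl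
    hsub hne1 hne2
  exact hw2 (subset_closure hw1)

/-- TUA implies DCF on every locally connected metric space. -/
theorem stmt6 {X : Type*} [MetricSpace X] [LocallyConnectedSpace X] (f : X → ℝ)
    (hf : Continuous f) (hTUA : IsTUA f) : HasDCF f := by
  intro u v huv A B hAne hBne hA hB hAf hBf
  obtain ⟨a₀, ha₀⟩ := hAne
  obtain ⟨b₀, hb₀⟩ := hBne
  have hK : IsCompact ({a₀, b₀} : Set X) := (Set.toFinite _).isCompact
  obtain ⟨g, hgt, hgu, hgK⟩ := hTUA _ hK
  have hga₀ : g a₀ = u := by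
    have := hgK a₀ (by simp)
    rw [this]; exact hAf ha₀
  have hgb₀ : g b₀ = v := by
    have := hgK b₀ (by simp)
    rw [this]; exact hBf hb₀
  have hgA : ∀ x ∈ A, g x = u := trunc_const_on_fiber hf hgt hA hAf ha₀ hga₀
  have hgB : ∀ x ∈ B, g x = v := trunc_const_on_fiber hf hgt hB hBf hb₀ hgb₀
  have hd : (0 : ℝ) < |u - v| := by
    rw [abs_pos, sub_ne_zero]; exact huv
  obtain ⟨ε, hε, hεball⟩ := Metric.uniformContinuous_iff.mp hgu _ hd
  refine ⟨ε, hε, fun a ha b hb => ?_⟩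
  by_contra h
  push_neg at h
  have := hεball (show dist a b < ε from h)
  rw [Real.dist_eq, hgA a ha, hgB b hb] at this
  exact lt_irrefl _ this
end

section
/- A metric space X is UC if and only if every bounded uniformly approachable continuous function f : X → ℝ is uniformly continuous. -/
open Metric Set Function

section Aux

variable {X : Type*} [MetricSpace X]

lemma helper_pos_dist (p : X) (S : Set X) (δ : ℝ) (hδ : 0 < δ)
    (hfin : (S ∩ ball p δ).Finite) (hp : p ∉ S) :
    ∃ η > 0, ∀ z ∈ S, η ≤ dist p z := by
  rcases (S ∩ ball p δ).eq_empty_or_nonempty with h | h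
  · refine ⟨δ, hδ, fun z hz => ?_⟩
    by_contra hlt
    push_neg at hlt
    exact (Set.eq_empty_iff_forall_notMem.1 h z)
      ⟨hz, by rwa [mem_ball, dist_comm]⟩
  · obtain ⟨z₀, hz₀, hmin⟩ := Set.exists_min_image _ (fun z => dist p z) hfin h
    have hz₀pos : 0 < dist p z₀ := by
      rw [dist_pos]
      rintro rfl
      exact hp hz₀.1
    refine ⟨min δ (dist p z₀), lt_min hδ hz₀pos, fun z hz => ?_⟩
    by_cases hb : z ∈ ball p δ
    · exact le_trans (min_le_right _ _) (hmin z ⟨hz, hb⟩)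
    · rw [mem_ball, dist_comm] at hb
      push_neg at hb
      exact le_trans (min_le_left _ _) hb

lemma helper_finite_small (c : ℝ) (hc : 0 < c) : {k : ℕ | c ≤ 1 / (k + 1)}.Finite := by
  apply Set.Finite.subset (Set.finite_Iic ⌈1/c⌉₊)
  intro k hk
  simp only [Set.mem_setOf_eq] at hk
  have hk1 : (0:ℝ) < k + 1 := by positivity
  have h2 : (k:ℝ) + 1 ≤ 1 / c := by
    rw [le_div_iff₀ hc]
    calc (↑k + 1) * c = c * (k+1) := by ring
    _ ≤ (1 / (k+1)) * (k+1) := by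
        apply mul_le_mul_of_nonneg_right hk (le_of_lt hk1)
    _ = 1 := by field_simp
  have : (k:ℝ) ≤ ⌈1/c⌉₊ := le_trans (by linarith) (Nat.le_ceil _)
  exact_mod_cast Set.mem_Iic.2 (by exact_mod_cast this)

lemma stage1 (f₀ : X → ℝ) (hc : Continuous f₀) (hnu : ¬ UniformContinuous f₀) :
    ∃ a b : ℕ → X, (∀ k, dist (a k) (b k) < 1 / (k + 1)) ∧ Function.Injective a ∧
      (∀ k m, a k ≠ b m) ∧
      ∀ p : X, ∃ δ > 0, {m | a m ∈ ball p δ ∨ b m ∈ ball p δ}.Finite := by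
  rw [Metric.uniformContinuous_iff] at hnu
  push_neg at hnu
  obtain ⟨ε, hε, H⟩ := hnu
  -- choose sequences
  have hxy : ∀ m : ℕ, ∃ u v : X, dist u v < 1 / (m + 1) ∧ ε ≤ dist (f₀ u) (f₀ v) := by
    intro m
    obtain ⟨u, v, h1, h2⟩ := H (1 / (m + 1)) (by positivity)
    exact ⟨u, v, h1, h2⟩
  choose x y hd hf using hxy
  -- local finiteness of the sequences around any point
  have Hfin : ∀ p : X, ∃ δ > 0, {m | x m ∈ ball p δ ∨ y m ∈ ball p δ}.Finite := by
    intro p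
    rw [Metric.continuous_iff] at hc
    obtain ⟨δ₀, hδ₀, hδ⟩ := hc p (ε / 2) (by linarith)
    refine ⟨δ₀ / 2, by linarith, ?_⟩
    apply Set.Finite.subset (helper_finite_small (δ₀ / 2) (by linarith))
    intro m hm
    simp only [Set.mem_setOf_eq] at hm ⊢
    by_contra hsmall
    push_neg at hsmall
    have hdm : dist (x m) (y m) < δ₀ / 2 := lt_trans (hd m) hsmall
    have hxm : x m ∈ ball p δ₀ ∧ y m ∈ ball p δ₀ := by
      rcases hm with h | h
      · constructor
        · exact ball_subset_ball (by linarith) h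
        · rw [mem_ball] at h ⊢
          calc dist (y m) p ≤ dist (y m) (x m) + dist (x m) p := dist_triangle _ _ _
          _ < δ₀ / 2 + δ₀ / 2 := by rw [dist_comm]; exact add_lt_add hdm h
          _ = δ₀ := by ring
      · constructor
        · rw [mem_ball] at h ⊢
          calc dist (x m) p ≤ dist (x m) (y m) + dist (y m) p := dist_triangle _ _ _
          _ < δ₀ / 2 + δ₀ / 2 := add_lt_add hdm h
          _ = δ₀ := by ring
        · exact ball_subset_ball (by linarith) h
    have e1 : dist (f₀ (x m)) (f₀ p) < ε / 2 := hδ _ (mem_ball.1 hxm.1)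
    have e2 : dist (f₀ (y m)) (f₀ p) < ε / 2 := hδ _ (mem_ball.1 hxm.2)
    have : dist (f₀ (x m)) (f₀ (y m)) < ε := by
      calc dist (f₀ (x m)) (f₀ (y m)) ≤ dist (f₀ (x m)) (f₀ p) + dist (f₀ p) (f₀ (y m)) :=
        dist_triangle _ _ _
      _ < ε / 2 + ε / 2 := by rw [dist_comm (f₀ p)]; exact add_lt_add e1 e2
      _ = ε := by ring
    exact absurd (hf m) (not_le.2 this)
  -- each point is hit finitely often
  have Hpt : ∀ p : X, {m | x m = p ∨ y m = p}.Finite := by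
    intro p
    obtain ⟨δ, hδ, hfin⟩ := Hfin p
    apply hfin.subset
    rintro m (rfl | rfl)
    · exact Or.inl (mem_ball_self hδ)
    · exact Or.inr (mem_ball_self hδ)
  have hxyne : ∀ m, x m ≠ y m := by
    intro m h
    have := hf m
    rw [h, dist_self] at this
    linarith
  -- extraction of a subsequence with pairwise distinct points
  set P : ℕ → ℕ → Prop := fun M N =>
    M < N ∧ ∀ i ≤ M, x N ≠ x i ∧ x N ≠ y i ∧ y N ≠ x i ∧ y N ≠ y i with hP
  have hPne : ∀ M, {N | P M N}.Nonempty := by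
    intro M
    have hbad : {N | ∃ i ≤ M, x N = x i ∨ x N = y i ∨ y N = x i ∨ y N = y i}.Finite := by
      have : {N | ∃ i ≤ M, x N = x i ∨ x N = y i ∨ y N = x i ∨ y N = y i} ⊆
          ⋃ i ∈ Set.Iic M, ({m | x m = x i ∨ y m = x i} ∪ {m | x m = y i ∨ y m = y i}) := by
        rintro N ⟨i, hi, h⟩
        refine Set.mem_biUnion (Set.mem_Iic.2 hi) ?_
        rcases h with h | h | h | h
        · exact Or.inl (Or.inl h)
        · exact Or.inr (Or.inl h)
        · exact Or.inl (Or.inr h)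
        · exact Or.inr (Or.inr h)
      exact Set.Finite.subset (Set.Finite.biUnion (Set.finite_Iic M)
        (fun i _ => (Hpt (x i)).union (Hpt (y i)))) this
    obtain ⟨N₀, hN₀⟩ := ((Set.finite_Iic M).union hbad).bddAbove
    refine ⟨N₀ + 1, ?_, ?_⟩
    · have : ¬ (N₀ + 1 ≤ M) := by
        intro h
        have := hN₀ (Set.mem_union_left _ (Set.mem_Iic.2 h))
        omega
      omega
    · intro i hi
      have hnb : N₀ + 1 ∉ {N | ∃ i ≤ M, x N = x i ∨ x N = y i ∨ y N = x i ∨ y N = y i} := by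
        intro h
        have := hN₀ (Set.mem_union_right _ h)
        omega
      simp only [Set.mem_setOf_eq, not_exists] at hnb
      have := hnb i
      push_neg at this
      exact this hi
  set n : ℕ → ℕ := fun k => Nat.rec 0 (fun _ nk => sInf {N | P nk N}) k with hn
  have hstep : ∀ k, P (n k) (n (k + 1)) := by
    intro k
    have : n (k+1) = sInf {N | P (n k) N} := rfl
    rw [this]
    exact Nat.sInf_mem (hPne (n k))
  have hmono : StrictMono n := strictMono_nat_of_lt_succ (fun k => (hstep k).1)
  have hcross : ∀ j k, j < k →
      x (n k) ≠ x (n j) ∧ x (n k) ≠ y (n j) ∧ y (n k) ≠ x (n j) ∧ y (n k) ≠ y (n j) := by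
    intro j k hjk
    obtain ⟨k, rfl⟩ : ∃ k', k = k' + 1 := ⟨k - 1, by omega⟩
    exact (hstep k).2 (n j) (hmono.monotone (by omega))
  refine ⟨fun k => y (n k), fun k => x (n k), ?_, ?_, ?_, ?_⟩
  · intro k
    calc dist (y (n k)) (x (n k)) = dist (x (n k)) (y (n k)) := dist_comm _ _
    _ < 1 / (n k + 1) := hd _
    _ ≤ 1 / (k + 1) := by
        apply one_div_le_one_div_of_le (by positivity)
        have hk : k ≤ n k := hmono.le_apply
        have : (k:ℝ) ≤ (n k : ℝ) := by exact_mod_cast hk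
        linarith
  · intro j k h
    by_contra hne
    rcases lt_trichotomy j k with hlt | rfl | hlt
    · exact (hcross j k hlt).2.2.2 h.symm
    · exact hne rfl
    · exact (hcross k j hlt).2.2.2 h
  · intro k m
    rcases lt_trichotomy m k with hlt | rfl | hlt
    · exact (hcross m k hlt).2.2.1
    · exact fun h => hxyne (n m) h.symm
    · exact fun h => (hcross k m hlt).2.1 h.symm
  · intro p
    obtain ⟨δ, hδ, hfin⟩ := Hfin p
    refine ⟨δ, hδ, ?_⟩
    have : {m | y (n m) ∈ ball p δ ∨ x (n m) ∈ ball p δ} ⊆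
        n ⁻¹' {m | x m ∈ ball p δ ∨ y m ∈ ball p δ} := by
      intro m hm
      simp only [Set.mem_preimage, Set.mem_setOf_eq] at hm ⊢
      tauto
    exact Set.Finite.subset (hfin.preimage (hmono.injective.injOn)) this

lemma stage2 (a b : ℕ → X) (h2 : Function.Injective a) (h3 : ∀ k m, a k ≠ b m)
    (h4 : ∀ p : X, ∃ δ > 0, {m | a m ∈ ball p δ ∨ b m ∈ ball p δ}.Finite) :
    ∃ r : ℕ → ℝ, (∀ k, 0 < r k) ∧ (∀ k, r k ≤ 1 / (k + 1)) ∧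
      (∀ k m, 10 * r k ≤ dist (a k) (b m)) ∧
      (∀ k m, k ≠ m → 10 * r k ≤ dist (a k) (a m)) := by
  have key : ∀ k : ℕ, ∃ η > 0, (∀ m, η ≤ dist (a k) (b m)) ∧
      (∀ m, m ≠ k → η ≤ dist (a k) (a m)) := by
    intro k
    obtain ⟨δ, hδ, hfin⟩ := h4 (a k)
    have hp : a k ∉ (Set.range b ∪ (Set.range a \ {a k})) := by
      rintro (⟨m, hm⟩ | ⟨-, hne⟩)
      · exact h3 k m hm.symm
      · exact hne rfl
    have hfin' : ((Set.range b ∪ (Set.range a \ {a k})) ∩ ball (a k) δ).Finite := by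
      have hsub : (Set.range b ∪ (Set.range a \ {a k})) ∩ ball (a k) δ ⊆
          (fun m => a m) '' {m | a m ∈ ball (a k) δ ∨ b m ∈ ball (a k) δ} ∪
          (fun m => b m) '' {m | a m ∈ ball (a k) δ ∨ b m ∈ ball (a k) δ} := by
        rintro z ⟨(⟨m, rfl⟩ | ⟨⟨m, rfl⟩, -⟩), hball⟩
        · exact Or.inr ⟨m, Or.inr hball, rfl⟩
        · exact Or.inl ⟨m, Or.inl hball, rfl⟩
      exact Set.Finite.subset ((hfin.image _).union (hfin.image _)) hsub
    obtain ⟨η, hη, hbound⟩ := helper_pos_dist (a k) _ δ hδ hfin' hp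
    refine ⟨η, hη, fun m => hbound _ (Or.inl ⟨m, rfl⟩), fun m hm => ?_⟩
    exact hbound _ (Or.inr ⟨⟨m, rfl⟩, fun h => hm (h2 h)⟩)
  choose η hη hb ha using key
  refine ⟨fun k : ℕ => min (1 / ((k:ℝ) + 1)) (η k) / 10, ?_, ?_, ?_, ?_⟩
  · intro k
    have : (0:ℝ) < 1 / (k+1) := by positivity
    have := hη k
    positivity
  · intro k
    have h1 : (0:ℝ) < 1 / (k+1) := by positivity
    have := min_le_left (1 / ((k:ℝ) + 1)) (η k)
    linarith
  · intro k m
    have := min_le_right (1 / ((k:ℝ) + 1)) (η k)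
    have := hb k m
    linarith
  · intro k m hkm
    have := min_le_right (1 / ((k:ℝ) + 1)) (η k)
    have := ha k m (Ne.symm hkm)
    linarith

lemma key (f₀ : X → ℝ) (hc₀ : Continuous f₀) (hnu : ¬ UniformContinuous f₀) :
    ∃ f : X → ℝ, Continuous f ∧ Bornology.IsBounded (Set.range f) ∧ IsUA f ∧
      ¬ UniformContinuous f := by
  obtain ⟨a, b, hab, hainj, hane, hfin⟩ := stage1 f₀ hc₀ hnu
  obtain ⟨r, hrpos, hrle, hsepb, hsepa⟩ := stage2 a b hainj hane hfin
  classical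
  set g : ℕ → X → ℝ := fun k z => max 0 (1 - dist z (a k) / r k) with hgdef
  set f : X → ℝ := fun z => ∑ᶠ k, g k z with hfdef
  -- basic evaluation facts
  have hg0 : ∀ k z, r k ≤ dist z (a k) → g k z = 0 := by
    intro k z h
    have := hrpos k
    apply max_eq_left
    rw [sub_nonpos, le_div_iff₀ this]
    linarith [this]
  have hg_nonneg : ∀ k z, 0 ≤ g k z := fun k z => le_max_left _ _
  have hg_le_one : ∀ k z, g k z ≤ 1 := by
    intro k z
    apply max_le (by norm_num)
    have h1 : 0 ≤ dist z (a k) / r k := div_nonneg dist_nonneg (hrpos k).le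
    linarith
  -- separation fact (A): if z is in the closed ball around a k and j ≠ k then g j z = 0
  have sepA : ∀ j k, j ≠ k → ∀ z : X, dist z (a k) ≤ r k → r j ≤ dist z (a j) := by
    intro j k hjk z hz
    have h1 : 10 * r j ≤ dist (a j) (a k) := hsepa j k hjk
    have h2 : 10 * r k ≤ dist (a j) (a k) := by
      rw [dist_comm]; exact hsepa k j (Ne.symm hjk)
    have h3 : dist (a j) (a k) ≤ dist (a j) z + dist z (a k) := dist_triangle _ _ _
    have h4 : dist (a j) z = dist z (a j) := dist_comm _ _
    have := hrpos j; have := hrpos k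
    linarith
  -- separation fact (B)
  have sepB : ∀ j k, j ≠ k → ∀ m z : X, dist m (a j) < r j → dist z (a k) ≤ r k →
      r k ≤ dist m z := by
    intro j k hjk m z hm hz
    have h1 : 10 * r j ≤ dist (a j) (a k) := hsepa j k hjk
    have h2 : 10 * r k ≤ dist (a j) (a k) := by
      rw [dist_comm]; exact hsepa k j (Ne.symm hjk)
    have h3 : dist (a j) (a k) ≤ dist (a j) m + dist m z + dist z (a k) :=
      dist_triangle4 _ _ _ _
    have h4 : dist (a j) m = dist m (a j) := dist_comm _ _
    have := hrpos j; have := hrpos k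
    linarith
  have heval1 : ∀ k z, dist z (a k) < r k → f z = g k z := by
    intro k z hz
    apply finsum_eq_single (fun j => g j z) k
    intro j hj
    exact hg0 j z (sepA j k hj z hz.le)
  have heval0 : ∀ z, (∀ k, r k ≤ dist z (a k)) → f z = 0 := by
    intro z hz
    exact finsum_eq_zero_of_forall_eq_zero fun k => hg0 k z (hz k)
  have hfa : ∀ k, f (a k) = 1 := by
    intro k
    rw [heval1 k (a k) (by rw [dist_self]; exact hrpos k)]
    simp [hgdef, dist_self]
  have hfb : ∀ m, f (b m) = 0 := by
    intro m
    apply heval0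
    intro k
    have := hsepb k m
    have h := dist_comm (b m) (a k)
    have := hrpos k
    linarith [hsepb k m, dist_comm (b m) (a k) ▸ (hsepb k m)]
  -- local finiteness of the closed balls
  have hLF : LocallyFinite (fun k => closedBall (a k) (r k)) := by
    intro p
    obtain ⟨δ, hδ, hf4⟩ := hfin p
    refine ⟨ball p (δ / 2), ball_mem_nhds p (by linarith), ?_⟩
    apply Set.Finite.subset (hf4.union (helper_finite_small (δ / 2) (by linarith)))
    rintro k ⟨z, hz1, hz2⟩
    rw [mem_closedBall] at hz1
    rw [mem_ball] at hz2
    by_cases hrk : r k < δ / 2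
    · left
      left
      rw [mem_ball]
      calc dist (a k) p ≤ dist (a k) z + dist z p := dist_triangle _ _ _
      _ = dist z (a k) + dist z p := by rw [dist_comm]
      _ < δ / 2 + δ / 2 := add_lt_add_of_le_of_lt (hz1.trans hrk.le) hz2
      _ = δ := by ring
    · right
      push_neg at hrk
      exact Set.mem_setOf_eq ▸ le_trans hrk (hrle k)
  -- continuity
  have hgcont : ∀ k, Continuous (fun z => g k z) := by
    intro k
    exact continuous_const.max
      (continuous_const.sub ((continuous_id.dist continuous_const).div_const _))
  have hcont : Continuous f := by
    apply continuous_finsum hgcont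
    apply hLF.subset
    intro k z hz
    rw [Function.mem_support] at hz
    rw [mem_closedBall]
    by_contra h
    push_neg at h
    exact hz (hg0 k z h.le)
  -- range bounds
  have hrange : ∀ z, 0 ≤ f z ∧ f z ≤ 1 := by
    intro z
    by_cases hz : ∃ k, dist z (a k) < r k
    · obtain ⟨k, hk⟩ := hz
      rw [heval1 k z hk]
      exact ⟨hg_nonneg k z, hg_le_one k z⟩
    · push_neg at hz
      rw [heval0 z hz]
      norm_num
  -- not uniformly continuous
  have hnotUC : ¬ UniformContinuous f := by
    rw [Metric.uniformContinuous_iff]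
    push_neg
    refine ⟨1, by norm_num, ?_⟩
    intro δ hδ
    obtain ⟨k, hk⟩ := exists_nat_one_div_lt hδ
    refine ⟨a k, b k, lt_trans (hab k) hk, ?_⟩
    rw [hfa k, hfb k, Real.dist_eq]
    norm_num
  refine ⟨f, hcont, ?_, ?_, hnotUC⟩
  · apply (Metric.isBounded_Icc (0:ℝ) 1).subset
    rintro _ ⟨z, rfl⟩
    exact ⟨(hrange z).1, (hrange z).2⟩
  -- the UA property
  intro K hK M
  rcases K.eq_empty_or_nonempty with rfl | hKne
  · rcases M.eq_empty_or_nonempty with rfl | ⟨m₀, hm₀⟩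
    · exact ⟨fun _ => 0, uniformContinuous_const, by simp, by simp⟩
    · refine ⟨fun _ => f m₀, uniformContinuous_const, by simp, ?_⟩
      rintro _ ⟨m, hm, rfl⟩
      exact ⟨m₀, hm₀, rfl⟩
  · set Fset : Set ℕ := {k | (closedBall (a k) (r k) ∩ K).Nonempty} with hFsetdef
    have hFfin : Fset.Finite := hLF.finite_nonempty_inter_compact hK
    set Fs : Finset ℕ := hFfin.toFinset with hFsdef
    have hFs_mem : ∀ k, k ∈ Fs ↔ (closedBall (a k) (r k) ∩ K).Nonempty := by
      intro k; rw [hFsdef, Set.Finite.mem_toFinset]; rfl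
    set fF : X → ℝ := fun z => ∑ k ∈ Fs, g k z with hfFdef
    have hfF_UC : UniformContinuous fF := by
      have : ∀ s : Finset ℕ, UniformContinuous (fun z => ∑ k ∈ s, g k z) := by
        intro s
        induction s using Finset.induction_on with
        | empty => simpa using uniformContinuous_const
        | @insert j s' hx ih =>
          have hgUC : UniformContinuous (fun z => g j z) := by
            have h1 : UniformContinuous fun z : X => dist z (a j) :=
              (LipschitzWith.dist_left (a j)).uniformContinuous
            have h2 : UniformContinuous fun z : X => (1:ℝ) - dist z (a j) / r j := by
              have h3 : UniformContinuous fun z : X => dist z (a j) / r j := by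
                simp only [div_eq_inv_mul]
                simpa [smul_eq_mul, Pi.smul_def] using h1.const_smul (r j)⁻¹
              exact uniformContinuous_const.sub h3
            exact (lipschitzWith_max.uniformContinuous).comp
              (uniformContinuous_const.prodMk h2)
          simpa [Finset.sum_insert hx] using hgUC.add ih
      exact this Fs
    -- sum over Fs equals f where off-indices vanish
    have hsum_eq : ∀ q : X, (∀ j, j ∉ Fs → g j q = 0) → fF q = f q := by
      intro q hq
      rw [hfFdef, hfdef]
      exact (finsum_eq_finset_sum_of_support_subset (fun j => g j q)
        (fun j hj => by by_contra h; exact (Function.mem_support.1 hj) (hq j h))).symm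
    have hKvanish : ∀ q ∈ K, ∀ j, j ∉ Fs → g j q = 0 := by
      intro q hq j hj
      rw [hFs_mem] at hj
      apply hg0
      by_contra h
      push_neg at h
      exact hj ⟨q, mem_closedBall.2 h.le, hq⟩
    have hKeq : ∀ q ∈ K, fF q = f q := fun q hq => hsum_eq q (hKvanish q hq)
    -- membership in an F-ball means fF agrees with f there
    have hFball_eq : ∀ m : X, ∀ k ∈ Fs, dist m (a k) ≤ r k → fF m = f m := by
      intro m k hkF hk
      apply hsum_eq
      intro j hj
      exact hg0 j m (sepA j k (fun h => hj (h ▸ hkF)) m hk)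
    have hFball_van : ∀ m : X, (∀ k ∈ Fs, r k < dist m (a k)) → fF m = 0 := by
      intro m hm
      rw [hfFdef]
      apply Finset.sum_eq_zero
      intro k hk
      exact hg0 k m (hm k hk).le
    by_cases hA : ∀ m ∈ M, f m ≠ 0
    case neg =>
      -- there is a point of M with value 0 (or M is empty); use g := fF
      refine ⟨fF, hfF_UC, hKeq, ?_⟩
      rintro _ ⟨m, hm, rfl⟩
      by_cases hcase : ∃ k ∈ Fs, dist m (a k) ≤ r k
      · obtain ⟨k, hkF, hk⟩ := hcase
        rw [hFball_eq m k hkF hk]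
        exact ⟨m, hm, rfl⟩
      · push_neg at hcase
        rw [hFball_van m hcase]
        push_neg at hA
        obtain ⟨m₀, hm₀, hfm₀⟩ := hA
        exact ⟨m₀, hm₀, hfm₀⟩
    case pos =>
      rcases M.eq_empty_or_nonempty with rfl | ⟨m₀, hm₀⟩
      · refine ⟨fF, hfF_UC, hKeq, by simp⟩
      -- construct the auxiliary plateau function t
      set D : Set X := K ∪ ⋃ k ∈ Fs, closedBall (a k) (r k) with hDdef
      have hDne : D.Nonempty := hKne.mono Set.subset_union_left
      set Cnon : Set X := ⋃ k : {k : ℕ // k ∉ Fset}, closedBall (a k.1) (r k.1) with hCdef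
      have hCclosed : IsClosed Cnon :=
        (hLF.comp_injective Subtype.val_injective).isClosed_iUnion
          (fun _ => isClosed_closedBall)
      have hKC : ∀ q ∈ K, q ∉ Cnon := by
        intro q hq hqC
        rw [hCdef, Set.mem_iUnion] at hqC
        obtain ⟨⟨k, hk⟩, hqk⟩ := hqC
        exact hk ⟨q, hqk, hq⟩
      obtain ⟨δ₁, hδ₁pos, hδ₁⟩ : ∃ δ₁ > 0, ∀ q ∈ K, ∀ z ∈ Cnon, δ₁ ≤ dist q z := by
        rcases Cnon.eq_empty_or_nonempty with hCe | hCne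
        · exact ⟨1, one_pos, fun q _ z hz => absurd (hCe ▸ hz) (Set.notMem_empty z)⟩
        · obtain ⟨q₀, hq₀K, hq₀min⟩ := hK.exists_isMinOn hKne
            (continuous_infDist_pt Cnon).continuousOn
          refine ⟨infDist q₀ Cnon, ?_, ?_⟩
          · exact (hCclosed.notMem_iff_infDist_pos hCne).1 (hKC q₀ hq₀K)
          · intro q hq z hz
            exact le_trans (hq₀min hq) (infDist_le_dist_of_mem hz)
      obtain ⟨δ₂, hδ₂pos, hδ₂⟩ : ∃ δ₂ > 0, ∀ k ∈ Fs, δ₂ ≤ r k := by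
        rcases Finset.eq_empty_or_nonempty Fs with hFe | hFne
        · exact ⟨1, one_pos, fun k hk => absurd (hFe ▸ hk) (Finset.notMem_empty k)⟩
        · exact ⟨Fs.inf' hFne r, (Finset.lt_inf'_iff hFne).2 (fun k _ => hrpos k),
            fun k hk => Finset.inf'_le r hk⟩
      set δ : ℝ := min δ₁ δ₂ with hδdef
      have hδpos : 0 < δ := lt_min hδ₁pos hδ₂pos
      set t : X → ℝ := fun z => min 1 (δ⁻¹ * infDist z D) with htdef
      have htUC : UniformContinuous t := by
        have h1 : UniformContinuous fun z : X => δ⁻¹ * infDist z D := by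
          simpa [smul_eq_mul, Pi.smul_def] using (uniformContinuous_infDist_pt D).const_smul δ⁻¹
        exact (lipschitzWith_min.uniformContinuous).comp
          (uniformContinuous_const.prodMk h1)
      have htD : ∀ m : X, m ∈ D → t m = 0 := by
        intro m hm
        show min 1 (δ⁻¹ * infDist m D) = 0
        rw [infDist_zero_of_mem hm]
        simp
      have htK : ∀ q ∈ K, t q = 0 := fun q hq => htD q (Set.mem_union_left _ hq)
      have htM : ∀ m ∈ M, (∀ k ∈ Fs, r k < dist m (a k)) → t m = 1 := by
        intro m hmM hm
        have hfm : f m ≠ 0 := hA m hmM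
        have hj : ∃ j, dist m (a j) < r j := by
          by_contra h
          push_neg at h
          exact hfm (heval0 m h)
        obtain ⟨j, hjball⟩ := hj
        have hjF : j ∉ Fset := by
          intro hjF
          have : j ∈ Fs := (hFs_mem j).2 hjF
          exact absurd hjball (not_lt.2 (hm j this).le)
        have hbound : δ ≤ infDist m D := by
          by_contra hlt
          push_neg at hlt
          obtain ⟨z, hz, hzlt⟩ := (infDist_lt_iff hDne).1 hlt
          refine absurd hzlt (not_lt.2 ?_)
          rcases hz with hzK | hzF
          · have := hδ₁ z hzK m (Set.mem_iUnion.2 ⟨⟨j, hjF⟩, mem_closedBall.2 hjball.le⟩)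
            rw [dist_comm] at this
            exact le_trans (min_le_left _ _) this
          · rw [Set.mem_iUnion₂] at hzF
            obtain ⟨k, hkF, hzk⟩ := hzF
            have hjk : j ≠ k := fun h => hjF (h ▸ ((hFs_mem k).1 hkF))
            have := sepB j k hjk m z hjball (mem_closedBall.1 hzk)
            exact le_trans (min_le_right _ _) (le_trans (hδ₂ k hkF) this)
        show min 1 (δ⁻¹ * infDist m D) = 1
        rw [min_eq_left]
        rw [← div_eq_inv_mul, le_div_iff₀ hδpos]
        linarith
      refine ⟨fun z => fF z + f m₀ * t z, ?_, ?_, ?_⟩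
      · have : UniformContinuous fun z => f m₀ * t z := by
          simpa [smul_eq_mul, Pi.smul_def] using htUC.const_smul (f m₀)
        exact hfF_UC.add this
      · intro q hq
        show fF q + f m₀ * t q = f q
        rw [htK q hq, hKeq q hq]
        ring
      · rintro _ ⟨m, hm, rfl⟩
        by_cases hcase : ∃ k ∈ Fs, dist m (a k) ≤ r k
        · obtain ⟨k, hkF, hk⟩ := hcase
          have hmD : m ∈ D := Set.mem_union_right _
            (Set.mem_iUnion₂.2 ⟨k, hkF, mem_closedBall.2 hk⟩)
          show fF m + f m₀ * t m ∈ f '' M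
          rw [htD m hmD, hFball_eq m k hkF hk]
          simp only [mul_zero, add_zero]
          exact ⟨m, hm, rfl⟩
        · push_neg at hcase
          show fF m + f m₀ * t m ∈ f '' M
          rw [hFball_van m hcase, htM m hm hcase]
          simp only [zero_add, mul_one]
          exact ⟨m₀, hm₀, rfl⟩

end Aux

/-- A metric space is UC (every continuous real-valued function is uniformly
continuous) iff every bounded uniformly approachable continuous function is
uniformly continuous. -/
theorem stmt7 {X : Type*} [MetricSpace X] :
    (∀ f : X → ℝ, Continuous f → UniformContinuous f) ↔
      (∀ f : X → ℝ, Continuous f → Bornology.IsBounded (Set.range f) → IsUA f →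
        UniformContinuous f) := by
  constructor
  · intro h f hf _ _
    exact h f hf
  · intro h f hf
    by_contra hnu
    obtain ⟨F, hFc, hFb, hFua, hFnu⟩ := key f hf hnu
    exact hFnu (h F hFc hFb hFua)
end

section
/- Let X be a thin metric space and let A, B be disjoint closed uniformly connected subsets of X. Then A and B are at positive distance: there exists ε > 0 such that dist(a, b) ≥ ε for all a ∈ A and b ∈ B. -/
/-- The uniform quasi-component of `y` in `Y`: the intersection of all subsets
`U ⊆ Y` containing `y` that are at positive distance from `Y \ U`. -/
def uniformQuasiComponent {X : Type*} [MetricSpace X] (Y : Set X) (y : X) : Set X :=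
  ⋂₀ {U : Set X | U ⊆ Y ∧ y ∈ U ∧ ∃ ε > (0 : ℝ), ∀ u ∈ U, ∀ v ∈ Y \ U, ε ≤ dist u v}

/-- A metric space is thin if for every closed subset `Y` and every `y ∈ Y` the
uniform quasi-component of `y` in `Y` is connected. -/
def IsThin (X : Type*) [MetricSpace X] : Prop :=
  ∀ Y : Set X, IsClosed Y → ∀ y ∈ Y, IsConnected (uniformQuasiComponent Y y)

/-- A subset `A` of a metric space is uniformly connected if it admits no partition
into two nonempty sets at positive distance. -/
def IsUniformlyConnectedSet {X : Type*} [MetricSpace X] (A : Set X) : Prop :=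
  ¬ ∃ U V : Set X, U ∪ V = A ∧ U.Nonempty ∧ V.Nonempty ∧ Disjoint U V ∧
      ∃ ε > (0 : ℝ), ∀ u ∈ U, ∀ v ∈ V, ε ≤ dist u v

/-- In a thin metric space, two disjoint closed uniformly connected subsets are at
positive distance. -/
theorem stmt10 {X : Type*} [MetricSpace X] (hthin : IsThin X)
    (A B : Set X) (hA : IsClosed A) (hB : IsClosed B) (hAB : Disjoint A B)
    (hAu : IsUniformlyConnectedSet A) (hBu : IsUniformlyConnectedSet B) :
    ∃ ε > (0 : ℝ), ∀ a ∈ A, ∀ b ∈ B, ε ≤ dist a b := by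
  rcases A.eq_empty_or_nonempty with hAe | ⟨y, hy⟩
  · exact ⟨1, one_pos, fun a ha => absurd ha (by simp [hAe])⟩
  rcases B.eq_empty_or_nonempty with hBe | hBne
  · exact ⟨1, one_pos, fun a _ b hb => absurd hb (by simp [hBe])⟩
  by_contra h
  push_neg at h
  set Y := A ∪ B with hYdef
  have hY : IsClosed Y := hA.union hB
  have hconn := hthin Y hY y (Or.inl hy)
  have hqc : uniformQuasiComponent Y y = Y := by
    apply Set.Subset.antisymm
    · exact Set.sInter_subset_of_mem
        ⟨le_refl Y, Or.inl hy, 1, one_pos, fun u _ v hv => absurd hv.1 hv.2⟩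
    · intro z hz
      rw [uniformQuasiComponent, Set.mem_sInter]
      rintro U ⟨hUY, hyU, ε, hε, hsep⟩
      have hAU : A ⊆ U := by
        by_contra hAU
        rw [Set.not_subset] at hAU
        obtain ⟨a, haA, haU⟩ := hAU
        exact hAu ⟨A ∩ U, A \ U,
          by ext x; by_cases hx : x ∈ U <;> simp [hx],
          ⟨y, hy, hyU⟩, ⟨a, haA, haU⟩,
          Set.disjoint_left.mpr (fun x hx hx' => hx'.2 hx.2),
          ε, hε, fun u hu v hv => hsep u hu.2 v ⟨Or.inl hv.1, hv.2⟩⟩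
      have hBU : B ⊆ U := by
        by_contra hBU
        rw [Set.not_subset] at hBU
        obtain ⟨b, hbB, hbU⟩ := hBU
        rcases (B ∩ U).eq_empty_or_nonempty with hBUe | ⟨b', hb'⟩
        · obtain ⟨a, haA, b2, hb2, hlt⟩ := h ε hε
          have : ε ≤ dist a b2 := hsep a (hAU haA) b2
            ⟨Or.inr hb2, fun hu => Set.eq_empty_iff_forall_notMem.mp hBUe b2 ⟨hb2, hu⟩⟩
          linarith
        · exact hBu ⟨B ∩ U, B \ U,
            by ext x; by_cases hx : x ∈ U <;> simp [hx],
            ⟨b', hb'⟩, ⟨b, hbB, hbU⟩,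
            Set.disjoint_left.mpr (fun x hx hx' => hx'.2 hx.2),
            ε, hε, fun u hu v hv => hsep u hu.2 v ⟨Or.inr hv.1, hv.2⟩⟩
      rcases hz with hz | hz
      · exact hAU hz
      · exact hBU hz
  rw [hqc] at hconn
  obtain ⟨x, hxY, hxA, hxB⟩ := hconn.isPreconnected Aᶜ Bᶜ hA.isOpen_compl hB.isOpen_compl
    (fun x hx => by
      rcases hx with hx | hx
      · exact Or.inr (fun hb => hAB.ne_of_mem hx hb rfl)
      · exact Or.inl (fun ha => hAB.ne_of_mem ha hx rfl))
    ⟨hBne.choose, Or.inr hBne.choose_spec, fun ha => hAB.ne_of_mem ha hBne.choose_spec rfl⟩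
    ⟨y, Or.inl hy, fun hb => hAB.ne_of_mem hy hb rfl⟩
  rcases hxY with hx | hx
  · exact hxA hx
  · exact hxB hx
end

section
/- Every UA metric space is thin: if X is a metric space such that every continuous function f : X → ℝ is uniformly approachable, then X is thin. -/
namespace Stmt11Aux

open Metric Set

variable {X : Type*} [MetricSpace X]

/-- The defining family for the uniform quasi-component. -/
def fam (Y : Set X) (p : X) : Set (Set X) :=
  {U : Set X | U ⊆ Y ∧ p ∈ U ∧ ∃ ε > (0 : ℝ), ∀ u ∈ U, ∀ v ∈ Y \ U, ε ≤ dist u v}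

theorem uqc_def (Y : Set X) (p : X) :
    uniformQuasiComponent Y p = ⋂₀ fam Y p := rfl

/-- One step of an `ε`-chain inside `Y`. -/
def crel (Y : Set X) (ε : ℝ) : X → X → Prop := fun a b => b ∈ Y ∧ dist a b < ε

/-- The set of points of `Y` reachable from `p` by `ε`-chains inside `Y`. -/
def cset (Y : Set X) (p : X) (ε : ℝ) : Set X :=
  {z | z ∈ Y ∧ Relation.ReflTransGen (crel Y ε) p z}

variable {Y : Set X} {p z : X} {ε ε' : ℝ} {U : Set X}

theorem cset_mem_fam (hp : p ∈ Y) (hε : 0 < ε) : cset Y p ε ∈ fam Y p := by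
  refine ⟨fun w hw => hw.1, ⟨hp, Relation.ReflTransGen.refl⟩, ε, hε, ?_⟩
  intro u hu v hv
  by_contra hlt
  push_neg at hlt
  exact hv.2 ⟨hv.1, hu.2.tail ⟨hv.1, hlt⟩⟩

theorem cset_mono (h : ε ≤ ε') : cset Y p ε ⊆ cset Y p ε' := by
  rintro w ⟨hwY, hw⟩
  exact ⟨hwY, Relation.ReflTransGen.mono (p := crel Y ε') (fun a b (hab : crel Y ε a b) => (⟨hab.1, hab.2.trans_le h⟩ : crel Y ε' a b)) p w hw⟩

theorem cset_subset (hU : U ⊆ Y) (hpU : p ∈ U)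
    (hsep : ∀ u ∈ U, ∀ v ∈ Y \ U, ε ≤ dist u v) (hle : ε' ≤ ε) :
    cset Y p ε' ⊆ U := by
  rintro w ⟨-, hw⟩
  induction hw with
  | refl => exact hpU
  | @tail c d hpc hcd ih =>
    by_contra hdU
    exact absurd (hsep _ ih _ ⟨hcd.1, hdU⟩) (not_le.mpr (hcd.2.trans_le hle))

theorem cset_closed (hY : IsClosed Y) (hε : 0 < ε) : IsClosed (cset Y p ε) := by
  apply isClosed_of_closure_subset
  intro w hw
  have hwY : w ∈ Y := by
    have := closure_mono (show cset Y p ε ⊆ Y from fun u hu => hu.1) hw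
    rwa [hY.closure_eq] at this
  obtain ⟨u, hu, hwu⟩ := Metric.mem_closure_iff.mp hw ε hε
  exact ⟨hwY, hu.2.tail ⟨hwY, by rwa [dist_comm]⟩⟩

theorem mem_uqc_self (hp : p ∈ Y) : p ∈ uniformQuasiComponent Y p :=
  fun _ hU => hU.2.1

theorem uqc_subset_cset (hp : p ∈ Y) (hε : 0 < ε) :
    uniformQuasiComponent Y p ⊆ cset Y p ε :=
  Set.sInter_subset_of_mem (cset_mem_fam hp hε)

theorem uqc_closed (hY : IsClosed Y) : IsClosed (uniformQuasiComponent Y p) := by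
  apply isClosed_sInter
  rintro U ⟨hUY, hpU, ε, hε, hsep⟩
  apply isClosed_of_closure_subset
  intro w hw
  have hwY : w ∈ Y := by
    have := closure_mono hUY hw
    rwa [hY.closure_eq] at this
  by_contra hwU
  obtain ⟨u, hu, hwu⟩ := Metric.mem_closure_iff.mp hw ε hε
  exact absurd (hsep u hu w ⟨hwY, hwU⟩) (not_le.mpr (by rwa [dist_comm]))

/-- Extract an explicit finite chain from reachability. -/
theorem exists_chain (hp : p ∈ Y) (hz : Relation.ReflTransGen (crel Y ε) p z) :
    ∃ (k : ℕ) (x : ℕ → X), x 0 = p ∧ x k = z ∧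
      (∀ i < k, dist (x i) (x (i + 1)) < ε) ∧
      (∀ i ≤ k, x i ∈ cset Y p ε) := by
  induction hz with
  | refl =>
    refine ⟨0, fun _ => p, rfl, rfl, by omega, ?_⟩
    intro i _
    exact ⟨hp, Relation.ReflTransGen.refl⟩
  | @tail c d hpc hcd ih =>
    obtain ⟨k, x, h0, hk, hstep, hmem⟩ := ih
    refine ⟨k + 1, fun i => if i ≤ k then x i else d, ?_, ?_, ?_, ?_⟩
    · simpa using h0
    · simp
    · intro i hi
      rcases Nat.lt_or_ge i k with hik | hik
      · simpa [Nat.le_of_lt hik, Nat.succ_le_of_lt hik] using hstep i hik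
      · have hik' : i = k := by omega
        subst hik'
        simpa [hk] using hcd.2
    · intro i hi
      rcases le_or_gt i k with hik | hik
      · simpa [hik] using hmem i hik
      · have : ¬ i ≤ k := by omega
        simp only [this, if_false]
        exact ⟨hcd.1, hpc.tail hcd⟩

theorem exists_pos_not_mem {R : Set ℝ} (hR : R.Countable) : ∃ c : ℝ, 0 < c ∧ c ∉ R := by
  by_contra hcon
  push_neg at hcon
  have hIoi : (Set.Ioi (0 : ℝ)).Countable := hR.mono fun c hc => hcon c hc
  have hpre : ((fun x : ℝ => Real.exp x) ⁻¹' Set.Ioi 0).Countable :=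
    hIoi.preimage Real.exp_injective
  have huniv : (Set.univ : Set ℝ).Countable := by
    refine hpre.mono fun x _ => ?_
    exact Real.exp_pos x
  exact Cardinal.not_countable_real huniv

/-- The key lemma: a disconnection of the uniform quasi-component contradicts UA. -/
theorem kill (Y : Set X) (hY : IsClosed Y) (p : X) (hp : p ∈ Y)
    (hUA : ∀ f : X → ℝ, Continuous f → IsUA f)
    (A B : Set X) (hA : IsClosed A) (hB : IsClosed B)
    (hd : ∀ x, x ∈ A → x ∈ B → False)
    (hpA : p ∈ A) (b : X) (hbB : b ∈ B)
    (hbQ : b ∈ uniformQuasiComponent Y p)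
    (hQAB : uniformQuasiComponent Y p ⊆ A ∪ B) : False := by
  classical
  set Q := uniformQuasiComponent Y p with hQdef
  have hpQ : p ∈ Q := mem_uqc_self hp
  have hposn : ∀ n : ℕ, (0 : ℝ) < 1 / (n + 1) := by
    intro n; positivity
  have hchain : ∀ n : ℕ, b ∈ cset Y p (1 / (n + 1)) := fun n =>
    uqc_subset_cset hp (hposn n) hbQ
  choose k x h0 hk hstep hmem using fun n : ℕ => exists_chain hp (hchain n).2
  set P : Set X := ⋃ n : ℕ, x n '' Set.Iic (k n) with hPdef
  have hPc : P.Countable :=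
    Set.countable_iUnion fun n => ((Set.finite_Iic (k n)).image (x n)).countable
  set T : Set X := Q ∪ P with hTdef
  have hQT : Q ⊆ T := Set.subset_union_left
  have hPT : P ⊆ T := Set.subset_union_right
  -- tail of T is in small chain sets
  have htail : ∀ m : ℕ,
      Q ∪ (⋃ (n : ℕ) (_ : m ≤ n), x n '' Set.Iic (k n)) ⊆ cset Y p (1 / (m + 1)) := by
    intro m w hw
    rcases hw with hwQ | hwP
    · exact uqc_subset_cset hp (hposn m) hwQ
    · simp only [Set.mem_iUnion] at hwP
      obtain ⟨n, hmn, i, hi, rfl⟩ := hwP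
      refine cset_mono ?_ (hmem n i hi)
      apply one_div_le_one_div_of_le
      · positivity
      · have : (m : ℝ) ≤ n := Nat.cast_le.mpr hmn
        linarith
  have hTclosed : IsClosed T := by
    apply isClosed_of_closure_subset
    intro w hw
    by_cases hwT : w ∈ T
    · exact hwT
    have hwc : ∀ m : ℕ, w ∈ cset Y p (1 / (m + 1)) := by
      intro m
      have hsplit : T ⊆ (⋃ n ∈ Finset.range m, x n '' Set.Iic (k n)) ∪
          (Q ∪ ⋃ (n : ℕ) (_ : m ≤ n), x n '' Set.Iic (k n)) := by
        intro w' hw'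
        rw [hTdef] at hw'
        rcases hw' with hw'Q | hw'P
        · exact Or.inr (Or.inl hw'Q)
        · rw [hPdef] at hw'P
          simp only [Set.mem_iUnion] at hw'P
          obtain ⟨n, i, hi, rfl⟩ := hw'P
          rcases Nat.lt_or_ge n m with hnm | hnm
          · exact Or.inl (by
              simp only [Set.mem_iUnion, Finset.mem_range]
              exact ⟨n, hnm, ⟨i, hi, rfl⟩⟩)
          · exact Or.inr (Or.inr (by
              simp only [Set.mem_iUnion]
              exact ⟨n, hnm, ⟨i, hi, rfl⟩⟩))
      have hw' := closure_mono hsplit hw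
      rw [closure_union] at hw'
      rcases hw' with h1 | h2
      · exfalso
        have hfin : (⋃ n ∈ Finset.range m, x n '' Set.Iic (k n)).Finite :=
          Set.Finite.biUnion (Finset.range m).finite_toSet
            (fun n _ => (Set.finite_Iic (k n)).image (x n))
        rw [hfin.isClosed.closure_eq] at h1
        apply hwT
        apply hPT
        simp only [Set.mem_iUnion, Finset.mem_range] at h1
        obtain ⟨n, _, hn⟩ := h1
        exact Set.mem_iUnion.mpr ⟨n, hn⟩
      · have := closure_mono (htail m) h2
        rwa [(cset_closed hY (hposn m)).closure_eq] at this
    exfalso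
    apply hwT
    apply hQT
    rw [hQdef, uqc_def]
    intro U hU
    obtain ⟨hUY, hpU, ε, hε, hsep⟩ := hU
    obtain ⟨m, hm⟩ := exists_nat_one_div_lt hε
    exact cset_subset hUY hpU hsep (le_of_lt (by exact_mod_cast hm)) (hwc m)
  -- choose the slope c avoiding countably many ratios
  obtain ⟨c, hc0, hcR⟩ :=
    exists_pos_not_mem (hPc.image fun w => infDist w A / infDist w B)
  set h : X → ℝ := fun w => infDist w A - c * infDist w B with hhdef
  have hcont : Continuous h :=
    (continuous_infDist_pt A).sub (continuous_const.mul (continuous_infDist_pt B))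
  have hAne : A.Nonempty := ⟨p, hpA⟩
  have hBne : B.Nonempty := ⟨b, hbB⟩
  have hhA : ∀ w ∈ A, h w < 0 := by
    intro w hw
    have h1 : infDist w A = 0 := infDist_zero_of_mem hw
    have h2 : 0 < infDist w B :=
      (hB.notMem_iff_infDist_pos hBne).mp (fun hwB => hd w hw hwB)
    have := mul_pos hc0 h2
    simp only [hhdef, h1]
    linarith
  have hhB : ∀ w ∈ B, 0 < h w := by
    intro w hw
    have h1 : infDist w B = 0 := infDist_zero_of_mem hw
    have h2 : 0 < infDist w A :=
      (hA.notMem_iff_infDist_pos hAne).mp (fun hwA => hd w hwA hw)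
    simp only [hhdef, h1]
    linarith
  have hhT : ∀ w ∈ T, h w ≠ 0 := by
    intro w hw h0'
    by_cases hwA : w ∈ A
    · exact absurd h0' (ne_of_lt (hhA w hwA))
    by_cases hwB : w ∈ B
    · exact absurd h0' (ne_of_gt (hhB w hwB))
    have hwP : w ∈ P := by
      rw [hTdef] at hw
      rcases hw with hwQ | hwP
      · rcases hQAB hwQ with h' | h'
        · exact absurd h' hwA
        · exact absurd h' hwB
      · exact hwP
    have hdB : infDist w B ≠ 0 := by
      intro h'
      exact hwB (((hB.mem_iff_infDist_zero hBne)).mpr h')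
    apply hcR
    have hIA : infDist w A = c * infDist w B := by
      simp only [hhdef] at h0'; linarith
    have hval : infDist w A / infDist w B = c := by
      rw [hIA]; field_simp
    exact ⟨w, hwP, hval⟩
  set T0 : Set X := T ∩ h ⁻¹' Set.Iic 0 with hT0def
  set T1 : Set X := T ∩ h ⁻¹' Set.Ici 0 with hT1def
  have hT0c : IsClosed T0 := hTclosed.inter (isClosed_Iic.preimage hcont)
  have hT1c : IsClosed T1 := hTclosed.inter (isClosed_Ici.preimage hcont)
  have hpT0 : p ∈ T0 := ⟨hQT hpQ, le_of_lt (hhA p hpA)⟩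
  have hbT1 : b ∈ T1 := ⟨hQT hbQ, le_of_lt (hhB b hbB)⟩
  have hT0ne : T0.Nonempty := ⟨p, hpT0⟩
  have hT1ne : T1.Nonempty := ⟨b, hbT1⟩
  have hdisj01 : ∀ w, w ∈ T0 → w ∈ T1 → False := fun w h0' h1' =>
    hhT w h0'.1 (le_antisymm h0'.2 h1'.2)
  have hcover : ∀ w ∈ T, w ∈ T0 ∨ w ∈ T1 := fun w hw =>
    (le_total (h w) 0).imp (fun h' => ⟨hw, h'⟩) (fun h' => ⟨hw, h'⟩)
  set f : X → ℝ := fun w => infDist w T0 / (infDist w T0 + infDist w T1) with hfdef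
  have hden : ∀ w, 0 < infDist w T0 + infDist w T1 := by
    intro w
    rcases lt_or_eq_of_le (add_nonneg (infDist_nonneg (s := T0) (x := w))
      (infDist_nonneg (s := T1) (x := w))) with h' | h'
    · exact h'
    exfalso
    have e0 : infDist w T0 = 0 := by
      have := infDist_nonneg (s := T0) (x := w)
      have := infDist_nonneg (s := T1) (x := w)
      linarith
    have e1 : infDist w T1 = 0 := by
      have := infDist_nonneg (s := T0) (x := w)
      have := infDist_nonneg (s := T1) (x := w)
      linarith
    have m0 : w ∈ T0 := (hT0c.mem_iff_infDist_zero hT0ne).mpr e0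
    have m1 : w ∈ T1 := (hT1c.mem_iff_infDist_zero hT1ne).mpr e1
    exact hdisj01 w m0 m1
  have hfc : Continuous f :=
    (continuous_infDist_pt T0).div
      ((continuous_infDist_pt T0).add (continuous_infDist_pt T1))
      fun w => (hden w).ne'
  have hf0 : ∀ w ∈ T0, f w = 0 := by
    intro w hw
    simp [hfdef, infDist_zero_of_mem hw]
  have hf1 : ∀ w ∈ T1, f w = 1 := by
    intro w hw
    have h1 : infDist w T1 = 0 := infDist_zero_of_mem hw
    have h2 : infDist w T0 ≠ 0 := by
      have : w ∉ T0 := fun h' => hdisj01 w h' hw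
      exact ne_of_gt ((hT0c.notMem_iff_infDist_pos hT0ne).mp this)
    simp [hfdef, h1, div_self h2]
  have hfT : ∀ w ∈ T, f w = 0 ∨ f w = 1 := fun w hw =>
    (hcover w hw).imp (hf0 w) (hf1 w)
  -- apply UA
  obtain ⟨g, hgu, hgK, hgM⟩ := hUA f hfc {p, b} ((Set.toFinite {p, b}).isCompact) T
  have hgp : g p = 0 := (hgK p (by simp)).trans (hf0 p hpT0)
  have hgb : g b = 1 := (hgK b (by simp)).trans (hf1 b hbT1)
  have hgT : ∀ w ∈ T, g w = 0 ∨ g w = 1 := by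
    intro w hw
    obtain ⟨u, hu, huw⟩ := hgM ⟨w, hw, rfl⟩
    rw [← huw]
    exact hfT u hu
  obtain ⟨δ, hδ0, hδ⟩ := Metric.uniformContinuous_iff.mp hgu (1 / 2) (by norm_num)
  obtain ⟨m, hm⟩ := exists_nat_one_div_lt hδ0
  have hm' : (1 : ℝ) / (m + 1) < δ := by exact_mod_cast hm
  have hmemT : ∀ i ≤ k m, x m i ∈ T := by
    intro i hi
    exact hPT (Set.mem_iUnion.mpr ⟨m, ⟨i, hi, rfl⟩⟩)
  have hzero : ∀ i, i ≤ k m → g (x m i) = 0 := by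
    intro i
    induction i with
    | zero =>
      intro _
      rw [h0 m]
      exact hgp
    | succ j ih =>
      intro hle
      have hj : j < k m := Nat.lt_of_succ_le hle
      have hgj : g (x m j) = 0 := ih (le_of_lt hj)
      have hdist : dist (x m j) (x m (j + 1)) < δ := lt_trans (hstep m j hj) hm'
      have h2 := hδ hdist
      rcases hgT _ (hmemT (j + 1) hle) with h' | h'
      · exact h'
      · exfalso
        rw [hgj, h', Real.dist_eq] at h2
        norm_num at h2
  have hfin := hzero (k m) le_rfl
  rw [hk m, hgb] at hfin
  exact one_ne_zero hfin

end Stmt11Aux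

/-- Every UA metric space is thin. -/
theorem stmt11 {X : Type*} [MetricSpace X]
    (hUA : ∀ f : X → ℝ, Continuous f → IsUA f) : IsThin X := by
  intro Y hY p hp
  have hpQ : p ∈ uniformQuasiComponent Y p := Stmt11Aux.mem_uqc_self hp
  constructor
  · exact ⟨p, hpQ⟩
  · intro u v hu hv hsub hne1 hne2
    by_contra hne
    rw [Set.not_nonempty_iff_eq_empty] at hne
    set Q := uniformQuasiComponent Y p with hQdef
    have hQclosed : IsClosed Q := Stmt11Aux.uqc_closed hY
    have hdisj : ∀ w, w ∈ Q → w ∈ u → w ∈ v → False := by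
      intro w hwQ hwu hwv
      have : w ∈ Q ∩ (u ∩ v) := ⟨hwQ, hwu, hwv⟩
      rw [hne] at this
      exact this
    obtain ⟨a, haQ, hau⟩ := hne1
    obtain ⟨b0, hb0Q, hb0v⟩ := hne2
    rcases hsub hpQ with hpu | hpv
    · -- p on the u side; take A = Q \ v, B = Q \ u
      refine Stmt11Aux.kill Y hY p hp hUA (Q \ v) (Q \ u)
        (hQclosed.inter hv.isClosed_compl) (hQclosed.inter hu.isClosed_compl)
        ?_ ⟨hpQ, fun hpv => hdisj p hpQ hpu hpv⟩ b0 ⟨hb0Q, fun hb0u => hdisj b0 hb0Q hb0u hb0v⟩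
        hb0Q ?_
      · rintro w ⟨hwQ, hwnv⟩ ⟨-, hwnu⟩
        rcases hsub hwQ with h' | h'
        · exact hwnu h'
        · exact hwnv h'
      · intro w hwQ
        rcases hsub hwQ with h' | h'
        · exact Or.inl ⟨hwQ, fun h'' => hdisj w hwQ h' h''⟩
        · exact Or.inr ⟨hwQ, fun h'' => hdisj w hwQ h'' h'⟩
    · -- p on the v side; take A = Q \ u, B = Q \ v
      refine Stmt11Aux.kill Y hY p hp hUA (Q \ u) (Q \ v)
        (hQclosed.inter hu.isClosed_compl) (hQclosed.inter hv.isClosed_compl)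
        ?_ ⟨hpQ, fun hpu => hdisj p hpQ hpu hpv⟩ a ⟨haQ, fun hav => hdisj a haQ hau hav⟩
        haQ ?_
      · rintro w ⟨hwQ, hwnu⟩ ⟨-, hwnv⟩
        rcases hsub hwQ with h' | h'
        · exact hwnu h'
        · exact hwnv h'
      · intro w hwQ
        rcases hsub hwQ with h' | h'
        · exact Or.inr ⟨hwQ, fun h'' => hdisj w hwQ h' h''⟩
        · exact Or.inl ⟨hwQ, fun h'' => hdisj w hwQ h'' h'⟩
end

section
/- Let X be a uniform space and let C⁺, C⁻ be closed subsets with X = C⁺ ∪ C⁻. Then the pair (C⁺, C⁻) is u-placed if and only if every continuous function f : X → ℝ whose restriction to C⁺ and restriction to C⁻ are both uniformly continuous is itself uniformly continuous. -/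
open Filter Set Metric Uniformity
open scoped SetRel

private lemma minLip (a b : ℝ) : |min 1 a - min 1 b| ≤ |a - b| := by
  have hab := le_abs_self (a - b)
  have hba := neg_abs_le (a - b)
  have hnn := abs_nonneg (a - b)
  rcases min_cases 1 a with ⟨e1, h1⟩ | ⟨e1, h1⟩ <;>
    rcases min_cases 1 b with ⟨e2, h2⟩ | ⟨e2, h2⟩ <;>
      rw [e1, e2, abs_le] <;> constructor <;> linarith

private lemma infDistLip {Y : Type*} [PseudoMetricSpace Y] (D : Set Y) (x y : Y) :
    |min 1 (Metric.infDist x D) - min 1 (Metric.infDist y D)| ≤ dist x y := by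
  refine le_trans (minLip _ _) ?_
  rw [abs_sub_le_iff]
  constructor
  · have := Metric.infDist_le_infDist_add_dist (x := x) (y := y) (s := D)
    linarith [dist_nonneg (x := x) (y := y)]
  · have := Metric.infDist_le_infDist_add_dist (x := y) (y := x) (s := D)
    rw [dist_comm] at this
    linarith

private lemma lbInfDist {Y : Type*} [PseudoMetricSpace Y] {D : Set Y} (hD : D.Nonempty) {x : Y}
    {ε : ℝ} (hx : ∀ z ∈ D, ε ≤ dist z x) : ε ≤ Metric.infDist x D := by
  by_contra h
  push_neg at h
  obtain ⟨y, hy, hxy⟩ := (Metric.infDist_lt_iff hD).1 h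
  exact absurd hxy (not_lt.2 (dist_comm x y ▸ hx y hy))

private lemma ucOn_of_eqOn {Y Z : Type*} [UniformSpace Y] [UniformSpace Z] {f g : Y → Z}
    {s : Set Y} (hg : UniformContinuous g) (h : Set.EqOn f g s) : UniformContinuousOn f s := by
  have hg' : Tendsto (fun x : Y × Y => (g x.1, g x.2)) (𝓤 Y ⊓ 𝓟 (s ×ˢ s)) (𝓤 Z) :=
    hg.mono_left inf_le_left
  refine Filter.Tendsto.congr' ?_ hg'
  have hmem : s ×ˢ s ∈ 𝓤 Y ⊓ 𝓟 (s ×ˢ s) := mem_inf_of_right (mem_principal_self _)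
  filter_upwards [hmem] with p hp
  rw [h hp.1, h hp.2]


private lemma sepFun {X : Type*} (F : Filter (X × X))
    (hrefl : 𝓟 SetRel.id ≤ F) (hsymm : Filter.Tendsto Prod.swap F F)
    (hcomp : F.lift' (fun s => s ○ s) ≤ F) (hcg : F.IsCountablyGenerated)
    {U : Set (X × X)} (hUF : U ∈ F) {D : Set X} (hD : D.Nonempty) :
    ∃ (g : X → ℝ) (δ : ℝ), 0 < δ ∧
      (∀ r ∈ 𝓤 ℝ, {p : X × X | (g p.1, g p.2) ∈ r} ∈ F) ∧
      (∀ x ∈ D, g x = 0) ∧ ∀ x : X, (∀ z ∈ D, (z, x) ∉ U) → δ ≤ g x := by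
  obtain ⟨I, hI⟩ := @UniformSpace.metrizable_uniformity X
    (UniformSpace.ofCore ⟨F, hrefl, hsymm, hcomp⟩) hcg
  have hFu : 𝓤[I.toUniformSpace] = F := by rw [hI]; rfl
  have hbd : F.HasBasis (fun ε : ℝ => 0 < ε)
      (fun ε => {p : X × X | @dist X I.toDist p.1 p.2 < ε}) := by
    rw [← hFu]
    exact @Metric.uniformity_basis_dist X I
  obtain ⟨ε₀, ε₀pos, hε₀⟩ := hbd.mem_iff.1 hUF
  refine ⟨fun x => min 1 (@Metric.infDist X I x D), min 1 ε₀, lt_min one_pos ε₀pos, ?_, ?_, ?_⟩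
  · intro r hr
    obtain ⟨ε, εpos, hε⟩ := Metric.mem_uniformity_dist.1 hr
    refine mem_of_superset (hbd.mem_of_mem εpos) fun p hp => hε ?_
    have hlip := @infDistLip X I D p.1 p.2
    show dist (min 1 (@Metric.infDist X I p.1 D)) (min 1 (@Metric.infDist X I p.2 D)) < ε
    rw [Real.dist_eq]
    exact lt_of_le_of_lt hlip hp
  · intro x hx
    show min 1 (@Metric.infDist X I x D) = 0
    rw [@Metric.infDist_zero_of_mem X I D x hx]
    simp
  · intro x hx
    have hlow : ∀ z ∈ D, ε₀ ≤ @dist X I.toDist z x := by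
      intro z hz
      by_contra hlt
      push_neg at hlt
      exact hx z hz (hε₀ hlt)
    show min 1 ε₀ ≤ min 1 (@Metric.infDist X I x D)
    exact min_le_min le_rfl (@lbInfDist X I D hD x ε₀ hlow)

/-- For an entourage `U`, the part of `C⁺` that is `U`-far from `C⁺ ∩ C⁻`. -/
def farPart {X : Type*} [UniformSpace X] (Cp Cm : Set X) (U : Set (X × X)) : Set X :=
  {x ∈ Cp | ∀ z ∈ Cp ∩ Cm, (z, x) ∉ U}

/-- A pair `(C⁺, C⁻)` of closed sets is u-placed if for every entourage `U` the sets
`C⁺_U` and `C⁻_U` are distant, i.e. there is an entourage `V` with `(a, b) ∉ V` for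
all `a ∈ C⁺_U` and `b ∈ C⁻_U`. -/
def UPlaced {X : Type*} [UniformSpace X] (Cp Cm : Set X) : Prop :=
  ∀ U ∈ uniformity X, ∃ V ∈ uniformity X,
    ∀ a ∈ farPart Cp Cm U, ∀ b ∈ farPart Cm Cp U, (a, b) ∉ V

/-- For a uniform space `X` covered by two closed sets `C⁺`, `C⁻`, the pair is
u-placed iff every continuous real-valued function on `X` which is uniformly
continuous on `C⁺` and on `C⁻` is uniformly continuous. -/
theorem stmt14 {X : Type*} [UniformSpace X] (Cp Cm : Set X)
    (hp : IsClosed Cp) (hm : IsClosed Cm) (hcov : Cp ∪ Cm = Set.univ) :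
    UPlaced Cp Cm ↔
      ∀ f : X → ℝ, Continuous f → UniformContinuousOn f Cp →
        UniformContinuousOn f Cm → UniformContinuous f := by
  constructor
  · intro hplaced f _hcont hfp hfm
    refine uniformContinuous_def.2 fun r hr => ?_
    obtain ⟨ε, εpos, hε⟩ := Metric.mem_uniformity_dist.1 hr
    -- moduli on the two pieces
    have hSp := mem_inf_principal.1 (hfp (Metric.dist_mem_uniformity (half_pos εpos)))
    have hSm := mem_inf_principal.1 (hfm (Metric.dist_mem_uniformity (half_pos εpos)))
    set Sp : Set (X × X) :=
      {x | x ∈ Cp ×ˢ Cp → x ∈ {p : X × X | dist (f p.1) (f p.2) < ε / 2}} with hSpdef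
    set Sm : Set (X × X) :=
      {x | x ∈ Cm ×ˢ Cm → x ∈ {p : X × X | dist (f p.1) (f p.2) < ε / 2}} with hSmdef
    have hS : Sp ∩ Sm ∈ 𝓤 X := inter_mem hSp hSm
    obtain ⟨U', hU', hU'symm, hU'comp⟩ := comp_symm_mem_uniformity_sets hS
    have hU'S : U' ⊆ Sp ∩ Sm := (subset_comp_self_of_mem_uniformity hU').trans hU'comp
    obtain ⟨V, hV, hsep⟩ := hplaced U' hU'
    have hW : SetRel.symmetrize (U' ∩ V) ∈ 𝓤 X := symmetrize_mem_uniformity (inter_mem hU' hV)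
    set W := SetRel.symmetrize (U' ∩ V) with hWdef
    have hWU' : W ⊆ U' := SetRel.symmetrize_subset_self.trans inter_subset_left
    have hWV : W ⊆ V := SetRel.symmetrize_subset_self.trans inter_subset_right
    have hWsymm : SetRel.IsSymm W := SetRel.isSymm_symmetrize
    -- the two pieces estimates
    have hestp : ∀ a b : X, a ∈ Cp → b ∈ Cp → (a, b) ∈ U' → dist (f a) (f b) < ε / 2 :=
      fun a b ha hb hab => (hU'S hab).1 ⟨ha, hb⟩
    have hestm : ∀ a b : X, a ∈ Cm → b ∈ Cm → (a, b) ∈ U' → dist (f a) (f b) < ε / 2 :=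
      fun a b ha hb hab => (hU'S hab).2 ⟨ha, hb⟩
    have hcomp : ∀ a b c : X, (a, b) ∈ U' → (b, c) ∈ U' → (a, c) ∈ Sp ∩ Sm :=
      fun a b c h1 h2 => hU'comp ⟨b, h1, h2⟩
    have key : ∀ a b : X, a ∈ Cp → b ∈ Cm → (a, b) ∈ W → dist (f a) (f b) < ε := by
      intro a b ha hb hab
      by_cases ha' : a ∈ farPart Cp Cm U'
      · by_cases hb' : b ∈ farPart Cm Cp U'
        · exact absurd (hWV hab) (hsep a ha' b hb')
        · -- b is close to some z ∈ Cm ∩ Cp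
          simp only [farPart, Set.mem_sep_iff, not_and, not_forall, not_not] at hb'
          obtain ⟨z, hz, hzb⟩ := hb' hb
          have h1 : dist (f z) (f b) < ε / 2 := hestm z b hz.1 hb hzb
          have h2 : dist (f z) (f a) < ε / 2 := by
            have hza : (z, a) ∈ Sp ∩ Sm := hcomp z b a hzb ((SetRel.comm U').1 (hWU' hab))
            exact hza.1 ⟨hz.2, ha⟩
          calc dist (f a) (f b) ≤ dist (f a) (f z) + dist (f z) (f b) := dist_triangle _ _ _
            _ < ε / 2 + ε / 2 := by rw [dist_comm (f a) (f z)]; exact add_lt_add h2 h1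
            _ = ε := add_halves ε
      · simp only [farPart, Set.mem_sep_iff, not_and, not_forall, not_not] at ha'
        obtain ⟨z, hz, hza⟩ := ha' ha
        have h1 : dist (f z) (f a) < ε / 2 := hestp z a hz.1 ha hza
        have h2 : dist (f z) (f b) < ε / 2 := by
          have hzb : (z, b) ∈ Sp ∩ Sm := hcomp z a b hza (hWU' hab)
          exact hzb.2 ⟨hz.2, hb⟩
        calc dist (f a) (f b) ≤ dist (f a) (f z) + dist (f z) (f b) := dist_triangle _ _ _
          _ < ε / 2 + ε / 2 := by rw [dist_comm (f a) (f z)]; exact add_lt_add h1 h2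
          _ = ε := add_halves ε
    refine mem_of_superset hW fun q hq => hε ?_
    have hq1 : q.1 ∈ Cp ∪ Cm := hcov ▸ Set.mem_univ _
    have hq2 : q.2 ∈ Cp ∪ Cm := hcov ▸ Set.mem_univ _
    have hqW : (q.1, q.2) ∈ W := hq
    rcases hq1 with h1 | h1 <;> rcases hq2 with h2 | h2
    · exact lt_trans (hestp q.1 q.2 h1 h2 (hWU' hqW)) (half_lt_self εpos)
    · exact key q.1 q.2 h1 h2 hqW
    · rw [dist_comm]
      exact key q.2 q.1 h2 h1 ((SetRel.comm W).1 hqW)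
    · exact lt_trans (hestm q.1 q.2 h1 h2 (hWU' hqW)) (half_lt_self εpos)
  · intro H U hU
    by_contra hn
    push_neg at hn
    -- a fast sequence of symmetric entourages below `U`
    obtain ⟨V, hVmem, hVsymm, hV0, hVcomp⟩ : ∃ V : ℕ → Set (X × X), (∀ n, V n ∈ 𝓤 X) ∧
        (∀ n, SetRel.IsSymm (V n)) ∧ V 0 ⊆ U ∧ ∀ n, V (n + 1) ○ V (n + 1) ⊆ V n := by
      choose W h1 h2 h3 using fun t : {s : Set (X × X) // s ∈ 𝓤 X} =>
        comp_symm_mem_uniformity_sets t.2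
      let step : {s : Set (X × X) // s ∈ 𝓤 X} → {s : Set (X × X) // s ∈ 𝓤 X} :=
        fun t => ⟨W t, h1 t⟩
      refine ⟨fun n => (step^[n + 1] ⟨U, hU⟩).1, fun n => ?_, fun n => ?_, ?_, fun n => ?_⟩
      · show (step^[n + 1] ⟨U, hU⟩).1 ∈ 𝓤 X
        rw [Function.iterate_succ_apply']
        exact h1 _
      · show SetRel.IsSymm (step^[n + 1] ⟨U, hU⟩).1
        rw [Function.iterate_succ_apply']
        exact h2 _
      · show (step^[1] ⟨U, hU⟩).1 ⊆ U
        rw [Function.iterate_one]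
        exact (subset_comp_self_of_mem_uniformity (h1 _)).trans (h3 _)
      · show (step^[n + 1 + 1] ⟨U, hU⟩).1 ○ (step^[n + 1 + 1] ⟨U, hU⟩).1 ⊆
          (step^[n + 1] ⟨U, hU⟩).1
        rw [Function.iterate_succ_apply' step (n + 1)]
        exact h3 _
    set D := Cp ∩ Cm with hDdef
    have hfr : frontier Cm ⊆ D := by
      intro a ha
      have haCm : a ∈ Cm := hm.closure_eq ▸ frontier_subset_closure ha
      refine ⟨?_, haCm⟩
      by_contra haCp
      have hsub : (Cpᶜ : Set X) ⊆ Cm := fun x hx => (hcov ▸ Set.mem_univ x).resolve_left hx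
      exact ha.2 (interior_maximal hsub hp.isOpen_compl haCp)
    rcases eq_empty_or_nonempty D with hDe | hDne
    · -- the intersection is empty: use the indicator function
      classical
      set f : X → ℝ := fun x => if x ∈ Cm then 0 else 1 with hf
      have hdisj : ∀ x, x ∈ Cp → x ∉ Cm := fun x hx hxm => by
        have : x ∈ D := ⟨hx, hxm⟩
        rw [hDe] at this
        exact absurd this (Set.notMem_empty x)
      have hcont : Continuous f := by
        refine Continuous.if ?_ continuous_const continuous_const
        intro a ha
        have : a ∈ D := hfr (by simpa using ha)
        rw [hDe] at this
        exact absurd this (Set.notMem_empty a)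
      have hUCp : UniformContinuousOn f Cp := ucOn_of_eqOn (g := fun _ => (1 : ℝ))
        uniformContinuous_const (fun x hx => by
          show (if x ∈ Cm then (0:ℝ) else 1) = 1
          rw [if_neg (hdisj x hx)])
      have hUCm : UniformContinuousOn f Cm := ucOn_of_eqOn (g := fun _ => (0 : ℝ))
        uniformContinuous_const (fun x hx => by
          show (if x ∈ Cm then (0:ℝ) else 1) = 0
          rw [if_pos hx])
      have hUC := H f hcont hUCp hUCm
      obtain ⟨a, ha, b, hb, hab⟩ := hn _ (hUC (Metric.dist_mem_uniformity one_pos))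
      have haCp : a ∈ Cp := ha.1
      have hbCm : b ∈ Cm := hb.1
      have hlt : dist (f a) (f b) < 1 := hab
      have hfa : f a = 1 := by show (if a ∈ Cm then (0:ℝ) else 1) = 1; rw [if_neg (hdisj a haCp)]
      have hfb : f b = 0 := by show (if b ∈ Cm then (0:ℝ) else 1) = 0; rw [if_pos hbCm]
      rw [hfa, hfb, Real.dist_eq, sub_zero, abs_one] at hlt
      exact absurd hlt (lt_irrefl 1)
    · -- the intersection is nonempty: build a pseudometric from the entourage sequence
      set F : Filter (X × X) := ⨅ n, 𝓟 (V n) with hFdef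
      have hid : ∀ n, SetRel.id ⊆ V n := fun n => SetRel.id_subset_iff.2 ⟨fun x => refl_mem_uniformity (hVmem n)⟩
      have hanti : Antitone V := antitone_nat_of_succ_le fun n x hx =>
        hVcomp n ⟨x.2, hx, refl_mem_uniformity (hVmem (n + 1))⟩
      have hdir : Directed (· ≥ ·) V := fun m n =>
        ⟨max m n, hanti (le_max_left m n), hanti (le_max_right m n)⟩
      have hFbasis : F.HasBasis (fun _ : ℕ => True) V := hasBasis_iInf_principal hdir
      have hFle : 𝓤 X ≤ F := le_iInf fun n => le_principal_iff.2 (hVmem n)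
      have hcore_refl : 𝓟 SetRel.id ≤ F := le_iInf fun n => principal_mono.2 (hid n)
      have hcore_symm : Filter.Tendsto Prod.swap F F :=
        (hFbasis.tendsto_iff hFbasis).2 fun n _ =>
          ⟨n, trivial, fun p hp => (SetRel.comm (V n)).1 hp⟩
      have hcore_comp : F.lift' (fun s => s ○ s) ≤ F :=
        le_iInf fun n => lift'_le (hFbasis.mem_of_mem (i := n + 1) trivial)
          (principal_mono.2 (hVcomp n))
      have hUF : U ∈ F := mem_of_superset (hFbasis.mem_of_mem (i := 0) trivial) hV0
      obtain ⟨g, δ, δpos, hgF, hgD, hglow⟩ :=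
        sepFun F hcore_refl hcore_symm hcore_comp hFbasis.isCountablyGenerated hUF hDne
      have hgUC : UniformContinuous g := uniformContinuous_def.2 fun r hr => hFle (hgF r hr)
      classical
      set f : X → ℝ := fun x => if x ∈ Cm then 0 else g x with hf
      have hcont : Continuous f := by
        refine Continuous.if ?_ continuous_const hgUC.continuous
        intro a ha
        exact (hgD a (hfr (by simpa using ha))).symm
      have hfg : Set.EqOn f g Cp := fun x hx => by
        by_cases hxm : x ∈ Cm
        · show (if x ∈ Cm then 0 else g x) = g x
          rw [if_pos hxm, hgD x ⟨hx, hxm⟩]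
        · show (if x ∈ Cm then 0 else g x) = g x
          rw [if_neg hxm]
      have hUCp : UniformContinuousOn f Cp := ucOn_of_eqOn hgUC hfg
      have hUCm : UniformContinuousOn f Cm := ucOn_of_eqOn (g := fun _ => (0 : ℝ))
        uniformContinuous_const (fun x hx => by
          show (if x ∈ Cm then (0:ℝ) else g x) = 0
          rw [if_pos hx])
      have hUC := H f hcont hUCp hUCm
      obtain ⟨a, ha, b, hb, hab⟩ := hn _ (hUC (Metric.dist_mem_uniformity δpos))
      have haCp : a ∈ Cp := ha.1
      have hafar : ∀ z ∈ Cp ∩ Cm, (z, a) ∉ U := ha.2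
      have hbCm : b ∈ Cm := hb.1
      have haCm : a ∉ Cm := fun haCm => hafar a ⟨haCp, haCm⟩ (refl_mem_uniformity hU)
      have hfa : δ ≤ f a := by
        have : δ ≤ g a := hglow a hafar
        show δ ≤ (if a ∈ Cm then 0 else g a)
        rwa [if_neg haCm]
      have hfb : f b = 0 := by
        show (if b ∈ Cm then (0:ℝ) else g b) = 0
        rw [if_pos hbCm]
      have hlt : dist (f a) (f b) < δ := hab
      rw [hfb, Real.dist_eq, sub_zero] at hlt
      linarith [le_abs_self (f a)]
end

section
/- Let X be a straight metric space and suppose X = C₁ ∪ ... ∪ Cₙ is a cover of X by finitely many closed sets. Then a continuous function f : X → ℝ is uniformly continuous if and only if each restriction f|_{Cₖ} (k = 1, ..., n) is uniformly continuous. -/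
open Metric Set

/-- A metric space is straight if for every cover by two closed sets, every continuous
real-valued function whose restrictions to both sets are uniformly continuous is
itself uniformly continuous. -/
def IsStraight (X : Type*) [MetricSpace X] : Prop :=
  ∀ F₁ F₂ : Set X, IsClosed F₁ → IsClosed F₂ → F₁ ∪ F₂ = Set.univ →
    ∀ f : X → ℝ, Continuous f → UniformContinuousOn f F₁ → UniformContinuousOn f F₂ →
      UniformContinuous f

lemma uplaced {X : Type*} [MetricSpace X] (hst : IsStraight X) (A B : Set X)
    (hA : IsClosed A) (hB : IsClosed B) (hAB : A ∪ B = Set.univ) :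
    ∀ ε > 0, ∃ δ > 0, ∀ p ∈ A, ∀ q ∈ B, dist p q < δ →
      ∃ z ∈ A ∩ B, dist p z < ε ∧ dist q z < ε := by
  intro ε hε
  by_contra hcon
  push_neg at hcon
  -- extract sequences
  have key : ∀ n : ℕ, ∃ p ∈ A, ∃ q ∈ B, dist p q < min ((1:ℝ)/(n+1)) (ε/2) ∧
      ∀ z ∈ A ∩ B, ε/2 ≤ dist p z := by
    intro n
    have hδ : (0:ℝ) < min ((1:ℝ)/(n+1)) (ε/2) := by positivity
    obtain ⟨p, hp, q, hq, hpq, hz⟩ := hcon _ hδ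
    refine ⟨p, hp, q, hq, hpq, fun z hzAB => ?_⟩
    rcases lt_or_ge (dist p z) ε with h | h
    · have h2 := hz z hzAB h
      have : dist q z ≤ dist q p + dist p z := dist_triangle _ _ _
      have hpq2 : dist p q < ε/2 := lt_of_lt_of_le hpq (min_le_right _ _)
      rw [dist_comm q p] at this
      linarith
    · linarith
  choose p hpA q hqB hpq hfar using key
  set S : Set X := Set.range p with hS
  have hSne : S.Nonempty := ⟨p 0, 0, rfl⟩
  -- for points of A ∩ B, infDist to S is at least ε/2
  have hABfar : ∀ x ∈ A ∩ B, ε/2 ≤ infDist x S := by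
    intro x hx
    by_contra h
    push_neg at h
    obtain ⟨y, ⟨n, rfl⟩, hy⟩ := (infDist_lt_iff hSne).mp h
    have := hfar n x hx
    rw [dist_comm] at hy
    linarith
  set c : ℝ := 2/ε with hc
  have hcpos : 0 < c := by positivity
  set φ : X → ℝ := fun x => max 0 (1 - c * infDist x S) with hφ
  set g : X → ℝ := fun x => infDist x A / (infDist x A + infDist x B) with hg
  set F : X → ℝ := fun x => φ x * g x with hF
  have hANe : A.Nonempty := ⟨p 0, hpA 0⟩
  have hBNe : B.Nonempty := ⟨q 0, hqB 0⟩
  have hφcont : Continuous φ :=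
    continuous_const.max (continuous_const.sub (continuous_const.mul (continuous_infDist_pt S)))
  have hφ01 : ∀ x, 0 ≤ φ x := fun x => le_max_left _ _
  have hφle1 : ∀ x, φ x ≤ 1 := by
    intro x
    have : (0:ℝ) ≤ c * infDist x S := mul_nonneg hcpos.le infDist_nonneg
    simp only [hφ, max_le_iff]
    constructor <;> linarith [hε]
  have hφlip : ∀ x y, |φ x - φ y| ≤ c * dist x y := by
    intro x y
    have h1 : |φ x - φ y| ≤ |(1 - c * infDist x S) - (1 - c * infDist y S)| := by
      simpa [max_comm] using abs_max_sub_max_le_abs (1 - c * infDist x S) (1 - c * infDist y S) 0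
    have h2 : |(1 - c * infDist x S) - (1 - c * infDist y S)| = c * |infDist x S - infDist y S| := by
      have he : (1 - c * infDist x S) - (1 - c * infDist y S) = c * (infDist y S - infDist x S) := by
        ring
      rw [he, abs_mul, abs_of_pos hcpos, abs_sub_comm]
    have h3 : |infDist x S - infDist y S| ≤ dist x y := by
      rw [abs_sub_le_iff]
      constructor
      · linarith [infDist_le_infDist_add_dist (x := x) (y := y) (s := S)]
      · linarith [infDist_le_infDist_add_dist (x := y) (y := x) (s := S), dist_comm x y]
    calc |φ x - φ y| ≤ c * |infDist x S - infDist y S| := by rw [← h2]; exact h1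
    _ ≤ c * dist x y := by nlinarith
  have hg01 : ∀ x, 0 ≤ g x ∧ g x ≤ 1 := by
    intro x
    have ha := infDist_nonneg (x := x) (s := A)
    have hb := infDist_nonneg (x := x) (s := B)
    rcases eq_or_lt_of_le (add_nonneg ha hb) with h | h
    · have : infDist x A = 0 := by linarith [ (by linarith : infDist x A + infDist x B = 0)]
      simp [hg, this]
    · constructor
      · positivity
      · rw [hg]
        exact div_le_one_of_le₀ (by linarith) (by linarith)
  -- on A, F = 0
  have hFA : ∀ x ∈ A, F x = 0 := by
    intro x hx
    have : infDist x A = 0 := infDist_zero_of_mem hx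
    simp [hF, hg, this]
  -- φ vanishes on A ∩ B
  have hφAB : ∀ x ∈ A ∩ B, φ x = 0 := by
    intro x hx
    have h1 := hABfar x hx
    have : 1 - c * infDist x S ≤ 0 := by
      have : c * (ε/2) ≤ c * infDist x S := by nlinarith
      have hce : c * (ε/2) = 1 := by rw [hc]; field_simp
      linarith
    simp [hφ, max_eq_left this]
  -- points with infDist to S small are not in A ∩ B
  have hnear : ∀ x, infDist x S < ε/2 → x ∉ A ∩ B := by
    intro x h hx
    exact absurd (hABfar x hx) (not_le.mpr h)
  -- on B, F = φ
  have hFB : ∀ x ∈ B, F x = φ x := by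
    intro x hx
    by_cases hxA : x ∈ A
    · rw [hFA x hxA, hφAB x ⟨hxA, hx⟩]
    · have hbpos : 0 < infDist x A := (hA.notMem_iff_infDist_pos hANe).mp hxA
      have hb0 : infDist x B = 0 := infDist_zero_of_mem hx
      have : g x = 1 := by rw [hg]; simp only [hb0, add_zero]; exact div_self hbpos.ne'
      simp [hF, this]
  -- continuity of F
  have hFcont : Continuous F := by
    rw [continuous_iff_continuousAt]
    intro x
    by_cases hx : infDist x S < ε/2
    · have hxAB : x ∉ A ∩ B := hnear x hx
      have hdenom : 0 < infDist x A + infDist x B := by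
        have hxu : x ∈ A ∪ B := hAB ▸ mem_univ x
        rcases hxu with hxA | hxB
        · have hxB : x ∉ B := fun h => hxAB ⟨hxA, h⟩
          have : 0 < infDist x B := (hB.notMem_iff_infDist_pos hBNe).mp hxB
          linarith [infDist_nonneg (x := x) (s := A)]
        · have hxA : x ∉ A := fun h => hxAB ⟨h, hxB⟩
          have : 0 < infDist x A := (hA.notMem_iff_infDist_pos hANe).mp hxA
          linarith [infDist_nonneg (x := x) (s := B)]
      have hgca : ContinuousAt g x := by
        apply ContinuousAt.div
        · exact (continuous_infDist_pt A).continuousAt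
        · exact ((continuous_infDist_pt A).add (continuous_infDist_pt B)).continuousAt
        · exact hdenom.ne'
      exact (hφcont.continuousAt).mul hgca
    · push_neg at hx
      have hFx : F x = 0 := by
        have : 1 - c * infDist x S ≤ 0 := by
          have hce : c * (ε/2) = 1 := by rw [hc]; field_simp
          nlinarith
        simp [hF, hφ, max_eq_left this]
      rw [Metric.continuousAt_iff]
      intro η hη
      refine ⟨min (ε/4) (η/c), by positivity, fun {y} hy => ?_⟩
      have hy1 : dist y x < ε/4 := lt_of_lt_of_le hy (min_le_left _ _)
      have hy2 : dist y x < η/c := lt_of_lt_of_le hy (min_le_right _ _)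
      have hyS : ε/2 - dist y x ≤ infDist y S := by
        have := infDist_le_infDist_add_dist (x := x) (y := y) (s := S)
        rw [dist_comm x y] at this
        linarith
      have hφy : φ y ≤ c * dist y x := by
        have h1 : 1 - c * infDist y S ≤ c * dist y x := by
          have hce : c * (ε/2) = 1 := by rw [hc]; field_simp
          nlinarith [infDist_nonneg (x := y) (s := S)]
        simp only [hφ, max_le_iff]
        exact ⟨by positivity, h1⟩
      have : |F y| ≤ φ y := by
        rw [hF, abs_mul, abs_of_nonneg (hφ01 y)]
        calc φ y * |g y| ≤ φ y * 1 := by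
              apply mul_le_mul_of_nonneg_left _ (hφ01 y)
              rw [abs_le]
              exact ⟨by linarith [(hg01 y).1], (hg01 y).2⟩
        _ = φ y := mul_one _
      rw [hFx, Real.dist_eq, sub_zero]
      calc |F y| ≤ φ y := this
      _ ≤ c * dist y x := hφy
      _ < c * (η/c) := by exact (mul_lt_mul_iff_right₀ hcpos).mpr hy2
      _ = η := by field_simp
  -- F is uniformly continuous on A
  have hFucA : UniformContinuousOn F A := by
    rw [Metric.uniformContinuousOn_iff]
    intro η hη
    exact ⟨1, one_pos, fun x hx y hy _ => by
      rw [hFA x hx, hFA y hy]; simpa using hη⟩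
  -- F is uniformly continuous on B
  have hFucB : UniformContinuousOn F B := by
    rw [Metric.uniformContinuousOn_iff]
    intro η hη
    refine ⟨η/c, by positivity, fun x hx y hy hd => ?_⟩
    rw [hFB x hx, hFB y hy, Real.dist_eq]
    calc |φ x - φ y| ≤ c * dist x y := hφlip x y
    _ < c * (η/c) := (mul_lt_mul_iff_right₀ hcpos).mpr hd
    _ = η := by field_simp
  -- straightness gives uniform continuity, contradiction
  have hFuc : UniformContinuous F := hst A B hA hB hAB F hFcont hFucA hFucB
  rw [Metric.uniformContinuous_iff] at hFuc
  obtain ⟨δ₀, hδ₀, hδ⟩ := hFuc (1/2) (by norm_num)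
  obtain ⟨m, hm⟩ := exists_nat_one_div_lt (show (0:ℝ) < min δ₀ (ε/4) by positivity)
  have hm1 : 1/((m:ℝ)+1) < δ₀ := lt_of_lt_of_le hm (min_le_left _ _)
  have hm2 : 1/((m:ℝ)+1) < ε/4 := lt_of_lt_of_le hm (min_le_right _ _)
  have hdm : dist (p m) (q m) < δ₀ :=
    lt_of_lt_of_le (hpq m) ((min_le_left _ _).trans hm1.le)
  have hcontra := hδ hdm
  have hFp : F (p m) = 0 := hFA _ (hpA m)
  have hFq : F (q m) = φ (q m) := hFB _ (hqB m)
  have hqS : infDist (q m) S ≤ dist (p m) (q m) := by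
    rw [dist_comm]
    exact infDist_le_dist_of_mem ⟨m, rfl⟩
  have hφq : 1/2 < φ (q m) := by
    have h1 : 1 - c * infDist (q m) S ≤ φ (q m) := le_max_right _ _
    have h2 : infDist (q m) S < ε/4 := by
      calc infDist (q m) S ≤ dist (p m) (q m) := hqS
      _ < min ((1:ℝ)/(m+1)) (ε/2) := hpq m
      _ ≤ (1:ℝ)/((m:ℝ)+1) := min_le_left _ _
      _ < ε/4 := hm2
    have hce : c * (ε/4) = 1/2 := by rw [hc]; field_simp; ring
    nlinarith [infDist_nonneg (x := q m) (s := S)]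
  rw [hFp, hFq, Real.dist_eq] at hcontra
  have : |(0:ℝ) - φ (q m)| = φ (q m) := by
    rw [zero_sub, abs_neg, abs_of_nonneg (hφ01 _)]
  rw [this] at hcontra
  linarith


lemma chainAux {X : Type*} [MetricSpace X] (hst : IsStraight X) {n : ℕ} (hn : 0 < n) (C : Fin n → Set X)
    (hC : ∀ k, IsClosed (C k)) (hcov : ⋃ k, C k = Set.univ) (f : X → ℝ)
    (huc : ∀ k, UniformContinuousOn f (C k)) (m : ℕ) :
    ∀ ε > 0, ∃ δ > 0, ∀ L : Finset (Fin n), L.Nonempty →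
      (Finset.univ \ L).card ≤ m → ∀ x y : X,
      (∀ l ∈ L, ∃ p ∈ C l, dist x p < δ ∧ dist (f x) (f p) < ε) →
      dist x y < δ → dist (f x) (f y) < 5^(m+1) * ε := by
  have hFinNe : Nonempty (Fin n) := ⟨⟨0, hn⟩⟩
  -- common modulus for the pieces
  have hmod : ∀ ε > (0:ℝ), ∃ ω > 0, ∀ i : Fin n, ∀ p ∈ C i, ∀ q ∈ C i,
      dist p q < ω → dist (f p) (f q) < ε := by
    intro ε hε
    have h1 : ∀ i : Fin n, ∃ w, 0 < w ∧ ∀ p ∈ C i, ∀ q ∈ C i,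
        dist p q < w → dist (f p) (f q) < ε := by
      intro i
      obtain ⟨w, hw, h⟩ := Metric.uniformContinuousOn_iff.mp (huc i) ε hε
      exact ⟨w, hw, fun p hp q hq hd => h p hp q hq hd⟩
    choose w hw hwp using h1
    refine ⟨Finset.univ.inf' Finset.univ_nonempty w, ?_, ?_⟩
    · exact (Finset.lt_inf'_iff _).mpr fun i _ => hw i
    · intro i p hp q hq hd
      exact hwp i p hp q hq (hd.trans_le (Finset.inf'_le _ (Finset.mem_univ i)))
  -- uniform u-placedness for all bipartitions
  have hUP : ∀ τ > (0:ℝ), ∃ d > 0, ∀ s : Finset (Fin n),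
      ∀ p ∈ ⋃ l ∈ s, C l, ∀ q ∈ ⋃ l ∈ Finset.univ \ s, C l, dist p q < d →
      ∃ z ∈ (⋃ l ∈ s, C l) ∩ ⋃ l ∈ Finset.univ \ s, C l,
        dist p z < τ ∧ dist q z < τ := by
    intro τ hτ
    have h2 : ∀ s : Finset (Fin n), ∃ d, 0 < d ∧
        ∀ p ∈ ⋃ l ∈ s, C l, ∀ q ∈ ⋃ l ∈ Finset.univ \ s, C l, dist p q < d →
        ∃ z ∈ (⋃ l ∈ s, C l) ∩ ⋃ l ∈ Finset.univ \ s, C l,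
          dist p z < τ ∧ dist q z < τ := by
      intro s
      have hA : IsClosed (⋃ l ∈ s, C l) := isClosed_biUnion_finset fun l _ => hC l
      have hB : IsClosed (⋃ l ∈ Finset.univ \ s, C l) :=
        isClosed_biUnion_finset fun l _ => hC l
      have hABu : (⋃ l ∈ s, C l) ∪ (⋃ l ∈ Finset.univ \ s, C l) = Set.univ := by
        apply Set.eq_univ_of_forall
        intro x
        have hx : x ∈ ⋃ k, C k := hcov ▸ Set.mem_univ x
        obtain ⟨k, hk⟩ := Set.mem_iUnion.mp hx
        by_cases hks : k ∈ s
        · exact Or.inl (Set.mem_biUnion hks hk)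
        · exact Or.inr (Set.mem_biUnion (Finset.mem_sdiff.mpr ⟨Finset.mem_univ k, hks⟩) hk)
      obtain ⟨d, hd, hdp⟩ := uplaced hst _ _ hA hB hABu τ hτ
      exact ⟨d, hd, hdp⟩
    choose d hd hdp using h2
    refine ⟨Finset.univ.inf' Finset.univ_nonempty d, ?_, ?_⟩
    · exact (Finset.lt_inf'_iff _).mpr fun s _ => hd s
    · intro s p hp q hq hpq
      exact hdp s p hp q hq (hpq.trans_le (Finset.inf'_le _ (Finset.mem_univ s)))
  induction m with
  | zero =>
    intro ε hε
    obtain ⟨ω, hω, hωp⟩ := hmod ε hε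
    refine ⟨ω/3, by positivity, fun L hL hcard x y hyp hxy => ?_⟩
    have hLuniv : ∀ j : Fin n, j ∈ L := by
      intro j
      by_contra hj
      have : j ∈ Finset.univ \ L := Finset.mem_sdiff.mpr ⟨Finset.mem_univ j, hj⟩
      have h0 : Finset.univ \ L = ∅ := Finset.card_eq_zero.mp (Nat.le_zero.mp hcard)
      simp [h0] at this
    obtain ⟨j, hj⟩ := Set.mem_iUnion.mp (hcov ▸ Set.mem_univ y)
    obtain ⟨p, hp, hxp, hfxp⟩ := hyp j (hLuniv j)
    have hpy : dist p y < ω := by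
      have := dist_triangle p x y
      rw [dist_comm p x] at this
      linarith [dist_triangle p x y]
    have h2 : dist (f p) (f y) < ε := hωp j p hp y hj hpy
    calc dist (f x) (f y) ≤ dist (f x) (f p) + dist (f p) (f y) := dist_triangle _ _ _
      _ < ε + ε := by linarith
      _ < 5^(0+1) * ε := by norm_num; linarith
  | succ m IH =>
    intro ε hε
    obtain ⟨δ', hδ'pos, IH'⟩ := IH (3*ε) (by positivity)
    obtain ⟨ω, hω, hωp⟩ := hmod ε hε
    set τ : ℝ := min δ' ω / 4 with hτdef
    have hτ : 0 < τ := by positivity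
    obtain ⟨δu, hδu, hUPp⟩ := hUP τ hτ
    have hτδ' : τ ≤ δ'/4 := by
      rw [hτdef]
      have := min_le_left δ' ω
      linarith
    have hτω : τ ≤ ω/4 := by
      rw [hτdef]
      have := min_le_right δ' ω
      linarith
    refine ⟨min (δu/2) τ, by positivity, fun L hL hcard x y hyp hxy => ?_⟩
    set δ : ℝ := min (δu/2) τ with hδdef
    have hδτ : δ ≤ τ := min_le_right _ _
    have hδu2 : δ ≤ δu/2 := min_le_left _ _
    obtain ⟨j, hj⟩ := Set.mem_iUnion.mp (hcov ▸ Set.mem_univ y)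
    have hpow : (5:ℝ)^(m+1) ≥ 1 := one_le_pow₀ (by norm_num)
    by_cases hjL : j ∈ L
    · -- shortcut : y's set is already in L
      obtain ⟨p, hp, hxp, hfxp⟩ := hyp j hjL
      have hpy : dist p y < ω := by
        have h1 := dist_triangle p x y
        rw [dist_comm p x] at h1
        linarith
      have h2 : dist (f p) (f y) < ε := hωp j p hp y hj hpy
      calc dist (f x) (f y) ≤ dist (f x) (f p) + dist (f p) (f y) := dist_triangle _ _ _
        _ < 2 * ε := by linarith
        _ < 5^(m+1+1) * ε := by
            have : (2:ℝ) < 5^(m+1+1) := by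
              have : (5:ℝ)^(m+1+1) ≥ 5 := by
                calc (5:ℝ)^(m+1+1) = 5^(m+1) * 5 := by ring
                _ ≥ 1 * 5 := by linarith
                _ = 5 := by ring
              linarith
            exact (mul_lt_mul_of_pos_right this hε).trans_eq' (by ring)
    · -- main case: jump to the intersection
      obtain ⟨l₀, hl₀⟩ := hL
      obtain ⟨p₀, hp₀, hxp₀, hfxp₀⟩ := hyp l₀ hl₀
      have hp₀A : p₀ ∈ ⋃ l ∈ L, C l := Set.mem_biUnion hl₀ hp₀
      have hyB : y ∈ ⋃ l ∈ Finset.univ \ L, C l :=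
        Set.mem_biUnion (Finset.mem_sdiff.mpr ⟨Finset.mem_univ j, hjL⟩) hj
      have hp₀y : dist p₀ y < δu := by
        have h1 := dist_triangle p₀ x y
        rw [dist_comm p₀ x] at h1
        linarith
      obtain ⟨z, ⟨hzA, hzB⟩, hpz, hyz⟩ := hUPp L p₀ hp₀A y hyB hp₀y
      obtain ⟨a, haL, hza⟩ := Set.mem_iUnion₂.mp hzA
      obtain ⟨b, hbmem, hzb⟩ := Set.mem_iUnion₂.mp hzB
      have hbL : b ∉ L := (Finset.mem_sdiff.mp hbmem).2
      -- dist x z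
      have hxz : dist x z < δ + τ := by
        calc dist x z ≤ dist x p₀ + dist p₀ z := dist_triangle _ _ _
          _ < δ + τ := by linarith
      -- f x close to f z via C a
      obtain ⟨pa, hpa, hxpa, hfxpa⟩ := hyp a haL
      have hpaz : dist pa z < ω := by
        have h1 := dist_triangle pa x z
        rw [dist_comm pa x] at h1
        linarith
      have hfpz : dist (f pa) (f z) < ε := hωp a pa hpa z hza hpaz
      have hfxz : dist (f x) (f z) < 2*ε := by
        calc dist (f x) (f z) ≤ dist (f x) (f pa) + dist (f pa) (f z) := dist_triangle _ _ _
          _ < 2*ε := by linarith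
      -- apply induction hypothesis with L' = insert b L and points z, y
      have hcard' : (Finset.univ \ insert b L).card ≤ m := by
        have he : Finset.univ \ insert b L = (Finset.univ \ L).erase b := by
          ext u
          simp [Finset.mem_sdiff, Finset.mem_erase, Finset.mem_insert]
          try tauto
        rw [he, Finset.card_erase_of_mem hbmem]
        omega
      have hyp' : ∀ l ∈ insert b L, ∃ p ∈ C l, dist z p < δ' ∧ dist (f z) (f p) < 3*ε := by
        intro l hlmem
        rcases Finset.mem_insert.mp hlmem with rfl | hlL
        · exact ⟨z, hzb, by rw [dist_self]; exact hδ'pos, by rw [dist_self]; positivity⟩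
        · obtain ⟨pl, hpl, hxpl, hfxpl⟩ := hyp l hlL
          refine ⟨pl, hpl, ?_, ?_⟩
          · have h1 := dist_triangle z x pl
            rw [dist_comm z x] at h1
            linarith
          · calc dist (f z) (f pl) ≤ dist (f z) (f x) + dist (f x) (f pl) := dist_triangle _ _ _
              _ = dist (f x) (f z) + dist (f x) (f pl) := by rw [dist_comm (f z) (f x)]
              _ < 3*ε := by linarith
      have hzy : dist z y < δ' := by
        rw [dist_comm]
        linarith
      have hfzy : dist (f z) (f y) < 5^(m+1) * (3*ε) :=
        IH' (insert b L) (Finset.insert_nonempty b L) hcard' z y hyp' hzy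
      calc dist (f x) (f y) ≤ dist (f x) (f z) + dist (f z) (f y) := dist_triangle _ _ _
        _ < 2*ε + 5^(m+1) * (3*ε) := by linarith
        _ ≤ 5^(m+1+1) * ε := by
            have h5 : (5:ℝ)^(m+1+1) = 5 * 5^(m+1) := by ring
            have key : 0 ≤ ε * ((5:ℝ)^(m+1) - 1) := mul_nonneg hε.le (by linarith)
            rw [h5]
            nlinarith [key]

/-- In a straight metric space covered by finitely many closed sets, a continuous
real-valued function is uniformly continuous iff each of its restrictions to the
sets of the cover is uniformly continuous. -/
theorem stmt15 {X : Type*} [MetricSpace X] (hstraight : IsStraight X)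
    (n : ℕ) (C : Fin n → Set X) (hC : ∀ k, IsClosed (C k))
    (hcov : ⋃ k, C k = Set.univ) (f : X → ℝ) (hf : Continuous f) :
    UniformContinuous f ↔ ∀ k, UniformContinuousOn f (C k) := by
  constructor
  · intro h k
    rw [Metric.uniformContinuousOn_iff]
    intro ε hε
    obtain ⟨δ, hδ, H⟩ := Metric.uniformContinuous_iff.mp h ε hε
    exact ⟨δ, hδ, fun x _ y _ hd => H hd⟩
  · intro huc
    rcases Nat.eq_zero_or_pos n with rfl | hn
    · -- X is empty
      rw [Metric.uniformContinuous_iff]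
      intro ε hε
      refine ⟨1, one_pos, fun {a b} _ => ?_⟩
      obtain ⟨k, -⟩ := Set.mem_iUnion.mp (hcov ▸ Set.mem_univ a)
      exact k.elim0
    · rw [Metric.uniformContinuous_iff]
      intro ε hε
      have hε₀ : (0:ℝ) < ε / 5^(n+1) := by positivity
      obtain ⟨δ, hδ, hprop⟩ := chainAux hstraight hn C hC hcov f huc n (ε / 5^(n+1)) hε₀
      refine ⟨δ, hδ, fun {a b} hab => ?_⟩
      obtain ⟨i, hi⟩ := Set.mem_iUnion.mp (hcov ▸ Set.mem_univ a)
      have hcard : (Finset.univ \ ({i} : Finset (Fin n))).card ≤ n := by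
        calc (Finset.univ \ ({i} : Finset (Fin n))).card ≤ (Finset.univ : Finset (Fin n)).card :=
              Finset.card_le_card Finset.sdiff_subset
          _ = n := by simp
      have hyp : ∀ l ∈ ({i} : Finset (Fin n)), ∃ p ∈ C l,
          dist a p < δ ∧ dist (f a) (f p) < ε / 5^(n+1) := by
        intro l hl
        rw [Finset.mem_singleton] at hl
        subst hl
        exact ⟨a, hi, by rw [dist_self]; exact hδ, by rw [dist_self]; exact hε₀⟩
      have hres := hprop {i} (Finset.singleton_nonempty i) hcard a b hyp hab
      calc dist (f a) (f b) < 5^(n+1) * (ε / 5^(n+1)) := hres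
        _ = ε := by field_simp
end
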